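/- arXiv:1603.00590 — 10 statements merged into one kernel-verified Lean document; each statement's English description precedes it below -/
import Mathlib

section
/- For every unit vector u ∈ ℝⁿ, the function f(t) = j_G(0, t·u) (defined for 0 ≤ t < d_G(0), where t·u ∈ G) has derivative 1/d_G(0) at t = 0 from the right; that is, f has derivative 1/d_G(0) at 0 within the set [0,∞). -/
/-- Let `G ⊊ ℝⁿ` be a domain with `0 ∈ G`. For every unit vector `u`,
the function `f t = j_G(0, t • u) = log (1 + dist 0 (t • u) / min (d_G 0) (d_G (t • u)))`
has right derivative `1 / d_G 0` at `t = 0`, i.e. derivative within `[0, ∞)`. -/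
theorem distance_ratio_deriv_at_zero (n : ℕ) (hn : 0 < n)
    (G : Set (EuclideanSpace ℝ (Fin n)))
    (hGopen : IsOpen G) (hGconn : IsConnected G) (hGne : G ≠ Set.univ)
    (h0 : (0 : EuclideanSpace ℝ (Fin n)) ∈ G)
    (u : EuclideanSpace ℝ (Fin n)) (hu : ‖u‖ = 1) :
    HasDerivWithinAt
      (fun t : ℝ =>
        Real.log (1 + dist 0 (t • u) /
          min (Metric.infDist 0 Gᶜ) (Metric.infDist (t • u) Gᶜ)))
      (1 / Metric.infDist 0 Gᶜ) (Set.Ici 0) 0 := by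
  have hGcne : Gᶜ.Nonempty := Set.nonempty_compl.mpr hGne
  set d0 := Metric.infDist (0 : EuclideanSpace ℝ (Fin n)) Gᶜ with hd0
  have hd0pos : 0 < d0 :=
    (hGopen.isClosed_compl.notMem_iff_infDist_pos hGcne).1 (by simpa using h0)
  set m : ℝ → ℝ := fun t => min d0 (Metric.infDist (t • u) Gᶜ) with hm
  have hmc : Continuous m :=
    continuous_const.min ((Metric.continuous_infDist_pt _).comp (continuous_id.smul continuous_const))
  have hm0 : m 0 = d0 := by simp [hm, ← hd0]
  have hmt : Filter.Tendsto m (nhds 0) (nhds d0) := by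
    simpa [hm0] using hmc.continuousAt (x := (0:ℝ)).tendsto
  have hmt' : Filter.Tendsto m (nhdsWithin 0 (Set.Ioi 0)) (nhds d0) :=
    hmt.mono_left nhdsWithin_le_nhds
  have hmpos : ∀ᶠ t in nhdsWithin (0:ℝ) (Set.Ioi 0), 0 < m t :=
    hmt'.eventually (eventually_gt_nhds hd0pos)
  rw [hasDerivWithinAt_iff_tendsto_slope, Set.Ici_sdiff_left]
  -- the slope of log (1+s) at 0 tends to 1
  have hL : Filter.Tendsto (slope (fun s : ℝ => Real.log (1 + s)) 0)
      (nhdsWithin 0 {(0:ℝ)}ᶜ) (nhds 1) := by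
    have h1 : HasDerivAt (fun s : ℝ => Real.log (1 + s)) 1 0 := by
      have h := (Real.hasDerivAt_log (by norm_num : (1:ℝ) + 0 ≠ 0)).comp 0
        ((hasDerivAt_id (0:ℝ)).const_add 1)
      simpa [Function.comp_def] using h
    exact hasDerivAt_iff_tendsto_slope.mp h1
  have hs : Filter.Tendsto (fun t => t / m t) (nhdsWithin (0:ℝ) (Set.Ioi 0))
      (nhdsWithin (0:ℝ) {(0:ℝ)}ᶜ) := by
    rw [tendsto_nhdsWithin_iff]
    constructor
    · have : Filter.Tendsto (fun t : ℝ => t / m t) (nhdsWithin (0:ℝ) (Set.Ioi 0))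
          (nhds (0 / d0)) :=
        Filter.Tendsto.div (Filter.tendsto_id.mono_left nhdsWithin_le_nhds) hmt' hd0pos.ne'
      simpa using this
    · filter_upwards [hmpos, self_mem_nhdsWithin] with t hmp ht
      have : 0 < t / m t := div_pos ht hmp
      exact Set.mem_compl_singleton_iff.mpr this.ne'
  have hLc : Filter.Tendsto (fun t => slope (fun s : ℝ => Real.log (1 + s)) 0 (t / m t))
      (nhdsWithin (0:ℝ) (Set.Ioi 0)) (nhds 1) := hL.comp hs
  have hinv : Filter.Tendsto (fun t => (m t)⁻¹) (nhdsWithin (0:ℝ) (Set.Ioi 0))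
      (nhds d0⁻¹) := hmt'.inv₀ hd0pos.ne'
  have hprod := hLc.mul hinv
  rw [one_mul] at hprod
  have key : Filter.Tendsto
      (slope (fun t : ℝ => Real.log (1 + dist 0 (t • u) /
        min (Metric.infDist 0 Gᶜ) (Metric.infDist (t • u) Gᶜ))) 0)
      (nhdsWithin (0:ℝ) (Set.Ioi 0)) (nhds d0⁻¹) := by
    refine hprod.congr' ?_
    filter_upwards [hmpos, self_mem_nhdsWithin] with t hmp ht
    have ht0 : (0:ℝ) < t := ht
    have hdist : dist (0 : EuclideanSpace ℝ (Fin n)) (t • u) = t := by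
      rw [dist_comm, dist_zero_right, norm_smul, hu, Real.norm_eq_abs,
        abs_of_pos ht0, mul_one]
    have hdist0 : dist (0 : EuclideanSpace ℝ (Fin n)) ((0:ℝ) • u) = 0 := by
      simp
    have hmeq : min (Metric.infDist (0:EuclideanSpace ℝ (Fin n)) Gᶜ)
        (Metric.infDist (t • u) Gᶜ) = m t := rfl
    simp only [slope_def_field, hdist, hdist0, hmeq, sub_zero]
    field_simp
    ring
  simpa [one_div] using key
end

section
/- For every y ∈ G and every continuously differentiable curve γ : [0,1] → ℝⁿ whose image is contained in G, with γ(0) = 0 and γ(1) = y, the quasihyperbolic length of γ satisfies ∫₀¹ ‖γ′(s)‖ / d_G(γ(s)) ds ≥ log(1 + |y| / d_G(0)). Consequently the quasihyperbolic distance satisfies k_G(0,y) ≥ log(1 + |y| / d_G(0)). -/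
open Metric MeasureTheory Set Function
open scoped Convolution Topology

/-- Existence of a `C¹` path joining two points of an open path-connected set. -/
lemma exists_C1_path {n : ℕ} {G : Set (EuclideanSpace ℝ (Fin n))} (hGopen : IsOpen G)
    {x y : EuclideanSpace ℝ (Fin n)} (hxy : JoinedIn G x y) :
    ∃ γ : ℝ → EuclideanSpace ℝ (Fin n), ContDiff ℝ 1 γ ∧ (∀ s, γ s ∈ G) ∧ γ 0 = x ∧ γ 1 = y := by
  obtain ⟨p, hp⟩ := hxy
  set q : ℝ → EuclideanSpace ℝ (Fin n) := fun t => p.extend (3 * t - 1) with hq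
  have hqc : Continuous q := p.continuous_extend.comp (by continuity)
  have hqG : ∀ t, q t ∈ G := by
    intro t
    have h1 : q t ∈ range p.extend := mem_range_self _
    rw [Path.extend_range] at h1
    obtain ⟨u, hu⟩ := h1
    rw [← hu]; exact hp u
  -- uniform continuity of q
  have hqu : UniformContinuous q := by
    have h1 : UniformContinuous (⇑p) := CompactSpace.uniformContinuous_of_continuous p.continuous
    have h2 : UniformContinuous p.extend :=
      h1.comp (LipschitzWith.projIcc zero_le_one).uniformContinuous
    have h3 : LipschitzWith 3 (fun t : ℝ => 3 * t - 1) := by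
      apply LipschitzWith.of_dist_le_mul
      intro a b
      rw [Real.dist_eq, Real.dist_eq, show (3*a-1) - (3*b-1) = 3*(a-b) by ring, abs_mul]
      norm_num
    exact h2.comp h3.uniformContinuous
  -- compact set and thickening
  have hK : IsCompact (range (⇑p)) := isCompact_range p.continuous
  have hKG : range (⇑p) ⊆ G := range_subset_iff.mpr hp
  obtain ⟨δ, hδ, hthick⟩ := hK.exists_thickening_subset_open hGopen hKG
  obtain ⟨r0, hr0, hqr⟩ := Metric.uniformContinuous_iff.mp hqu (δ/2) (by positivity)
  set r : ℝ := min (r0/2) (1/6) with hrdef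
  have hr : 0 < r := lt_min (by positivity) (by norm_num)
  set φ : ContDiffBump (0:ℝ) := ⟨r/2, r, by positivity, by linarith⟩ with hφ
  set γ : ℝ → EuclideanSpace ℝ (Fin n) :=
    (φ.normed volume) ⋆[ContinuousLinearMap.lsmul ℝ ℝ, volume] q with hγ
  have hsmooth : ContDiff ℝ 1 γ :=
    (HasCompactSupport.contDiff_convolution_left _ φ.hasCompactSupport_normed
      (φ.contDiff_normed (n := ⊤)) hqc.locallyIntegrable).of_le (by exact_mod_cast le_top)
  have hclose : ∀ t, dist (γ t) (q t) ≤ δ/2 := by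
    intro t
    apply ContDiffBump.dist_normed_convolution_le hqc.aestronglyMeasurable
    intro x' hx'
    have : dist x' t < r0 := by
      have := mem_ball.mp hx'
      have hrle : r ≤ r0/2 := min_le_left _ _
      calc dist x' t < r := this
        _ ≤ r0/2 := hrle
        _ < r0 := by linarith
    exact (hqr this).le
  have hmem : ∀ t, γ t ∈ G := by
    intro t
    apply hthick
    rw [Metric.mem_thickening_iff]
    refine ⟨q t, ?_, lt_of_le_of_lt (hclose t) (by linarith)⟩
    have h1 : q t ∈ range p.extend := mem_range_self _
    rwa [Path.extend_range] at h1
  have hr6 : r ≤ 1/6 := min_le_right _ _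
  have hγ0 : γ 0 = x := by
    have := ContDiffBump.normed_convolution_eq_right (φ := φ) (μ := volume) (g := q)
      (x₀ := (0:ℝ)) ?_
    · rw [hγ, this, hq]
      simp only
      rw [p.extend_of_le_zero (by norm_num)]
    · intro x' hx'
      have h1 : |x'| < r := by simpa [Real.dist_eq] using mem_ball.mp hx'
      have h2 : 3 * x' - 1 ≤ 0 := by
        have := abs_lt.mp h1
        nlinarith [hr6]
      rw [hq]
      simp only
      rw [p.extend_of_le_zero h2, p.extend_of_le_zero (by norm_num)]
  have hγ1 : γ 1 = y := by
    have := ContDiffBump.normed_convolution_eq_right (φ := φ) (μ := volume) (g := q)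
      (x₀ := (1:ℝ)) ?_
    · rw [hγ, this, hq]
      simp only
      rw [p.extend_of_one_le (by norm_num)]
    · intro x' hx'
      have h1 : |x' - 1| < r := by simpa [Real.dist_eq] using mem_ball.mp hx'
      have h2 : 1 ≤ 3 * x' - 1 := by
        have := abs_lt.mp h1
        nlinarith [hr6]
      rw [hq]
      simp only
      rw [p.extend_of_one_le h2, p.extend_of_one_le (by norm_num)]
  exact ⟨γ, hsmooth, hmem, hγ0, hγ1⟩

theorem quasihyperbolic_lower_bound (n : ℕ) (hn : 0 < n)
    (G : Set (EuclideanSpace ℝ (Fin n)))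
    (hGopen : IsOpen G) (hGconn : IsConnected G) (hGne : G ≠ Set.univ)
    (h0 : (0 : EuclideanSpace ℝ (Fin n)) ∈ G)
    (y : EuclideanSpace ℝ (Fin n)) (hy : y ∈ G) :
    (∀ γ : ℝ → EuclideanSpace ℝ (Fin n), ContDiff ℝ 1 γ →
        (∀ s ∈ Set.Icc (0 : ℝ) 1, γ s ∈ G) → γ 0 = 0 → γ 1 = y →
        Real.log (1 + ‖y‖ / Metric.infDist 0 Gᶜ) ≤
          ∫ s in (0 : ℝ)..1, ‖deriv γ s‖ / Metric.infDist (γ s) Gᶜ) ∧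
      Real.log (1 + ‖y‖ / Metric.infDist 0 Gᶜ) ≤
        sInf {L : ℝ | ∃ γ : ℝ → EuclideanSpace ℝ (Fin n), ContDiff ℝ 1 γ ∧
          (∀ s ∈ Set.Icc (0 : ℝ) 1, γ s ∈ G) ∧ γ 0 = 0 ∧ γ 1 = y ∧
          L = ∫ s in (0 : ℝ)..1, ‖deriv γ s‖ / Metric.infDist (γ s) Gᶜ} := by
  have hclosed : IsClosed Gᶜ := hGopen.isClosed_compl
  have hne : Gᶜ.Nonempty := Set.nonempty_compl.mpr hGne
  have hd : 0 < Metric.infDist (0 : EuclideanSpace ℝ (Fin n)) Gᶜ :=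
    (hclosed.notMem_iff_infDist_pos hne).mp (by simpa using h0)
  set d := Metric.infDist (0 : EuclideanSpace ℝ (Fin n)) Gᶜ with hddef
  have key : ∀ γ : ℝ → EuclideanSpace ℝ (Fin n), ContDiff ℝ 1 γ →
      (∀ s ∈ Set.Icc (0 : ℝ) 1, γ s ∈ G) → γ 0 = 0 → γ 1 = y →
      Real.log (1 + ‖y‖ / d) ≤ ∫ s in (0:ℝ)..1, ‖deriv γ s‖ / Metric.infDist (γ s) Gᶜ := by
    intro γ hγ hmem hγ0 hγ1
    have hgc : Continuous fun s => ‖deriv γ s‖ := (hγ.continuous_deriv le_rfl).norm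
    set g : ℝ → ℝ := fun s => ‖deriv γ s‖ with hgdef
    set L : ℝ → ℝ := fun s => ∫ t in (0:ℝ)..s, g t with hLdef
    have hLd : ∀ s, HasDerivAt L (g s) s := fun s =>
      (hgc.integral_hasStrictDerivAt 0 s).hasDerivAt
    have hLc : Continuous L :=
      continuous_iff_continuousAt.mpr fun s => (hLd s).continuousAt
    have hL0 : L 0 = 0 := intervalIntegral.integral_same
    have hLnn : ∀ s, 0 ≤ s → 0 ≤ L s := fun s hs =>
      intervalIntegral.integral_nonneg hs (fun t _ => norm_nonneg _)
    have hsub : ∀ s ∈ Set.Icc (0:ℝ) 1, ‖γ s‖ ≤ L s := by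
      intro s hs
      have h1 : ∫ t in (0:ℝ)..s, deriv γ t = γ s - γ 0 :=
        intervalIntegral.integral_deriv_eq_sub
          (fun t _ => (hγ.differentiable one_ne_zero).differentiableAt)
          ((hγ.continuous_deriv le_rfl).intervalIntegrable 0 s)
      calc ‖γ s‖ = ‖γ s - γ 0‖ := by rw [hγ0, sub_zero]
        _ = ‖∫ t in (0:ℝ)..s, deriv γ t‖ := by rw [h1]
        _ ≤ ∫ t in (0:ℝ)..s, ‖deriv γ t‖ :=
            intervalIntegral.norm_integral_le_integral_norm hs.1
        _ = L s := rfl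
    have hpos : ∀ s ∈ Set.Icc (0:ℝ) 1, 0 < Metric.infDist (γ s) Gᶜ := fun s hs =>
      (hclosed.notMem_iff_infDist_pos hne).mp (by simpa using hmem s hs)
    have hdL : ∀ s ∈ Set.Icc (0:ℝ) 1, Metric.infDist (γ s) Gᶜ ≤ d + L s := by
      intro s hs
      calc Metric.infDist (γ s) Gᶜ ≤ d + dist (γ s) 0 := Metric.infDist_le_infDist_add_dist
        _ = d + ‖γ s‖ := by rw [dist_zero_right]
        _ ≤ d + L s := (add_le_add_iff_left d).mpr (hsub s hs)
    have hdpos : ∀ s, 0 ≤ s → 0 < d + L s := fun s hs =>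
      add_pos_of_pos_of_nonneg hd (hLnn s hs)
    have huIcc : Set.uIcc (0:ℝ) 1 = Set.Icc (0:ℝ) 1 := Set.uIcc_of_le zero_le_one
    have hint1 : IntervalIntegrable (fun s => g s / (d + L s)) volume 0 1 := by
      apply ContinuousOn.intervalIntegrable
      rw [huIcc]
      exact hgc.continuousOn.div (continuous_const.add hLc).continuousOn
        (fun s hs => (hdpos s hs.1).ne')
    have hint2 : IntervalIntegrable (fun s => g s / Metric.infDist (γ s) Gᶜ) volume 0 1 := by
      apply ContinuousOn.intervalIntegrable
      rw [huIcc]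
      exact hgc.continuousOn.div
        (((Metric.continuous_infDist_pt Gᶜ).comp hγ.continuous).continuousOn)
        (fun s hs => (hpos s hs).ne')
    have hmono : ∫ s in (0:ℝ)..1, g s / (d + L s)
        ≤ ∫ s in (0:ℝ)..1, g s / Metric.infDist (γ s) Gᶜ := by
      apply intervalIntegral.integral_mono_on zero_le_one hint1 hint2
      intro s hs
      have h1 := hpos s hs
      have h2 := hdL s hs
      gcongr
    have heq : ∫ s in (0:ℝ)..1, g s / (d + L s)
        = Real.log (d + L 1) - Real.log (d + L 0) := by
      apply intervalIntegral.integral_eq_sub_of_hasDerivAt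
        (f := fun s => Real.log (d + L s))
      · intro x hx
        rw [huIcc] at hx
        exact ((hLd x).const_add d).log (hdpos x hx.1).ne'
      · exact hint1
    have hyL : ‖y‖ ≤ L 1 := hγ1 ▸ hsub 1 ⟨zero_le_one, le_rfl⟩
    have hfin : Real.log (1 + ‖y‖ / d) ≤ Real.log (d + L 1) - Real.log (d + L 0) := by
      rw [hL0, add_zero, ← Real.log_div (hdpos 1 zero_le_one).ne' hd.ne']
      have h3 : (d + L 1) / d = 1 + L 1 / d := by field_simp
      rw [h3]
      apply Real.log_le_log (by positivity)
      gcongr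
    calc Real.log (1 + ‖y‖ / d) ≤ ∫ s in (0:ℝ)..1, g s / (d + L s) := by rw [heq]; exact hfin
      _ ≤ ∫ s in (0:ℝ)..1, g s / Metric.infDist (γ s) Gᶜ := hmono
  refine ⟨key, ?_⟩
  have hpath : IsPathConnected G := hGopen.isConnected_iff_isPathConnected.mp hGconn
  obtain ⟨γ₀, hs, hm, h00, h11⟩ := exists_C1_path hGopen (hpath.joinedIn 0 h0 y hy)
  apply le_csInf
  · exact ⟨_, γ₀, hs, fun s _ => hm s, h00, h11, rfl⟩
  · rintro b ⟨γ, h1, h2, h3, h4, rfl⟩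
    exact key γ h1 h2 h3 h4
end

section
/- For every unit vector u ∈ ℝⁿ, the function f(t) = σ_G(0, t·u) = tan(π·s_G(0,t·u)/2) (defined for 0 ≤ t < d_G(0)) has derivative π/(4·d_G(0)) at t = 0 from the right; that is, f has derivative π/(4·d_G(0)) at 0 within the set [0,∞). -/
open Real Set Metric Filter

/-- Let `G ⊊ ℝⁿ` be a domain with `0 ∈ G`. For every unit vector `u`,
the function `f t = σ_G(0, t • u) = tan (π s_G(0, t • u) / 2)`, where
`s_G(0,w) = sup_{q ∈ ∂G} |0-w| / (|0-q| + |q-w|)`, has right derivative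
`π / (4 d_G 0)` at `t = 0`, i.e. derivative within `[0, ∞)`. -/
theorem sigma_deriv_at_zero (n : ℕ) (hn : 0 < n)
    (G : Set (EuclideanSpace ℝ (Fin n)))
    (hGopen : IsOpen G) (hGconn : IsConnected G) (hGne : G ≠ Set.univ)
    (h0 : (0 : EuclideanSpace ℝ (Fin n)) ∈ G)
    (u : EuclideanSpace ℝ (Fin n)) (hu : ‖u‖ = 1) :
    HasDerivWithinAt
      (fun t : ℝ =>
        Real.tan (Real.pi *
          sSup ((fun q => dist 0 (t • u) / (dist 0 q + dist q (t • u))) '' frontier G)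
          / 2))
      (Real.pi / (4 * Metric.infDist 0 Gᶜ)) (Set.Ici 0) 0 := by
  have hne : (Gᶜ).Nonempty := Set.nonempty_compl.mpr hGne
  have hclosed : IsClosed Gᶜ := hGopen.isClosed_compl
  set d := Metric.infDist (0 : EuclideanSpace ℝ (Fin n)) Gᶜ with hdd
  have hd : 0 < d := (hclosed.notMem_iff_infDist_pos hne).mp (by simpa using h0)
  -- ball ⊆ G
  have hball : Metric.ball (0 : EuclideanSpace ℝ (Fin n)) d ⊆ G := by
    intro x hx
    by_contra hxG
    have h1 : d ≤ dist 0 x := Metric.infDist_le_dist_of_mem (show x ∈ Gᶜ from hxG)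
    rw [Metric.mem_ball, dist_comm] at hx
    linarith
  -- nearest boundary point
  obtain ⟨q₀, hq₀c, hq₀d⟩ := hclosed.exists_infDist_eq_dist hne 0
  have hq₀f : q₀ ∈ frontier G := by
    rw [hGopen.frontier_eq]
    refine ⟨?_, hq₀c⟩
    have hmem : q₀ ∈ Metric.closedBall (0 : EuclideanSpace ℝ (Fin n)) d := by
      rw [Metric.mem_closedBall, dist_comm]
      exact le_of_eq hq₀d.symm
    rw [← closure_ball (0 : EuclideanSpace ℝ (Fin n)) hd.ne'] at hmem
    exact closure_mono hball hmem
  have hfr : ∀ q ∈ frontier G, d ≤ dist (0 : EuclideanSpace ℝ (Fin n)) q := by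
    intro q hq
    rw [hGopen.frontier_eq] at hq
    exact Metric.infDist_le_dist_of_mem hq.2
  set F : ℝ → ℝ := fun t =>
    sSup ((fun q => dist 0 (t • u) / (dist 0 q + dist q (t • u))) '' frontier G) with hF
  have hdist : ∀ t : ℝ, 0 ≤ t → dist (0 : EuclideanSpace ℝ (Fin n)) (t • u) = t := by
    intro t ht
    rw [dist_comm, dist_zero_right, norm_smul, hu]
    simp [abs_of_nonneg ht]
  have hub : ∀ t : ℝ, 0 < t → t < d → ∀ q ∈ frontier G,
      dist (0 : EuclideanSpace ℝ (Fin n)) (t • u) / (dist 0 q + dist q (t • u)) ≤ t / (2 * d - t) := by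
    intro t ht htd q hq
    have h1 : d ≤ dist (0 : EuclideanSpace ℝ (Fin n)) q := hfr q hq
    have h2 : dist (0 : EuclideanSpace ℝ (Fin n)) q ≤ dist (0 : EuclideanSpace ℝ (Fin n)) (t • u) + dist (t • u) q := dist_triangle _ _ _
    have h3 : dist q (t • u) = dist (t • u) q := dist_comm _ _
    rw [hdist t ht.le] at h2 ⊢
    have hden : 2 * d - t ≤ dist (0 : EuclideanSpace ℝ (Fin n)) q + dist q (t • u) := by
      rw [h3]; linarith
    exact div_le_div_of_nonneg_left ht.le (by linarith) hden
  have hkey : ∀ t : ℝ, 0 < t → t < d → t / (2 * d + t) ≤ F t ∧ F t ≤ t / (2 * d - t) := by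
    intro t ht htd
    constructor
    · have hmem : dist (0 : EuclideanSpace ℝ (Fin n)) (t • u) / (dist 0 q₀ + dist q₀ (t • u))
          ∈ (fun q => dist (0 : EuclideanSpace ℝ (Fin n)) (t • u) / (dist 0 q + dist q (t • u))) '' frontier G :=
        ⟨q₀, hq₀f, rfl⟩
      have hbdd : BddAbove ((fun q => dist (0 : EuclideanSpace ℝ (Fin n)) (t • u) / (dist 0 q + dist q (t • u))) '' frontier G) := by
        refine ⟨t / (2 * d - t), ?_⟩
        rintro x ⟨q, hq, rfl⟩
        exact hub t ht htd q hq
      refine le_trans ?_ (le_csSup hbdd hmem)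
      have h4 : dist q₀ (t • u) ≤ dist q₀ 0 + dist (0 : EuclideanSpace ℝ (Fin n)) (t • u) := dist_triangle _ _ _
      rw [dist_comm q₀ 0, ← hq₀d] at h4
      rw [hdist t ht.le] at h4 ⊢
      have hden0 : 0 < dist (0 : EuclideanSpace ℝ (Fin n)) q₀ + dist q₀ (t • u) := by
        have h5 := hfr q₀ hq₀f
        have h6 := dist_nonneg (x := q₀) (y := t • u)
        linarith
      apply div_le_div_of_nonneg_left ht.le hden0
      rw [← hq₀d]; linarith
    · refine Real.sSup_le ?_ (div_nonneg ht.le (by linarith))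
      rintro x ⟨q, hq, rfl⟩
      exact hub t ht htd q hq
  have hF0 : F 0 = 0 := by
    have himg : (fun q : EuclideanSpace ℝ (Fin n) => dist (0 : EuclideanSpace ℝ (Fin n)) ((0:ℝ) • u) / (dist 0 q + dist q ((0:ℝ) • u))) '' frontier G = {0} := by
      have heq : ∀ q ∈ frontier G,
          dist (0 : EuclideanSpace ℝ (Fin n)) ((0:ℝ) • u) / (dist 0 q + dist q ((0:ℝ) • u)) = 0 := by
        intro q hq; simp [zero_smul]
      rw [Set.image_congr heq, Set.Nonempty.image_const ⟨q₀, hq₀f⟩]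
    show sSup ((fun q : EuclideanSpace ℝ (Fin n) => dist (0 : EuclideanSpace ℝ (Fin n)) ((0:ℝ) • u) / (dist 0 q + dist q ((0:ℝ) • u))) '' frontier G) = 0
    rw [himg, csSup_singleton]
  -- auxiliary derivative lemma
  have haux : ∀ ε : ℝ, HasDerivAt (fun t : ℝ => Real.tan (Real.pi * (t / (2 * d + ε * t)) / 2)) (Real.pi / (4 * d)) 0 := by
    intro ε
    have hdne : d ≠ 0 := hd.ne'
    have hdenne : (2 * d + ε * (0:ℝ)) ≠ 0 := by simp [hd.ne']
    have h1 : HasDerivAt (fun t : ℝ => t / (2 * d + ε * t)) (1 / (2 * d)) 0 := by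
      have ha : HasDerivAt (fun t : ℝ => t) 1 0 := hasDerivAt_id 0
      have hb : HasDerivAt (fun t : ℝ => 2 * d + ε * t) ε 0 := by
        simpa using ((hasDerivAt_id (0:ℝ)).const_mul ε).const_add (2 * d)
      have hab := ha.div hb hdenne
      refine hab.congr_deriv ?_
      field_simp
      ring
    have h2 : HasDerivAt (fun t : ℝ => Real.pi * (t / (2 * d + ε * t)) / 2)
        (Real.pi / (4 * d)) 0 := by
      have := (h1.const_mul Real.pi).div_const 2
      refine this.congr_deriv ?_
      ring
    have h3 : Real.pi * ((0:ℝ) / (2 * d + ε * 0)) / 2 = 0 := by simp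
    have htan : HasDerivAt Real.tan (1 / Real.cos (Real.pi * ((0:ℝ) / (2 * d + ε * 0)) / 2) ^ 2)
        (Real.pi * ((0:ℝ) / (2 * d + ε * 0)) / 2) := by
      apply Real.hasDerivAt_tan
      rw [h3]; simp
    have hcomp := htan.comp 0 h2
    simp only [Function.comp_def] at hcomp
    refine hcomp.congr_deriv ?_
    rw [h3]
    simp
  -- slope limits
  have hslope : ∀ ε : ℝ,
      Filter.Tendsto (slope (fun t : ℝ => Real.tan (Real.pi * (t / (2 * d + ε * t)) / 2)) 0)
        (nhdsWithin 0 (Set.Ioi 0)) (nhds (Real.pi / (4 * d))) := by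
    intro ε
    have h := ((haux ε).hasDerivWithinAt (s := Set.Ioi 0))
    rw [hasDerivWithinAt_iff_tendsto_slope] at h
    simpa [Set.diff_singleton_eq_self (by simp : (0:ℝ) ∉ Set.Ioi 0)] using h
  have tanmono : ∀ x y : ℝ, 0 ≤ x → x ≤ y → y < Real.pi / 2 → Real.tan x ≤ Real.tan y := by
    intro x y hx hxy hy
    rcases eq_or_lt_of_le hxy with rfl | h
    · exact le_rfl
    · exact (Real.tan_lt_tan_of_nonneg_of_lt_pi_div_two hx hy h).le
  -- main
  rw [hasDerivWithinAt_iff_tendsto_slope, Set.Ici_sdiff_left]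
  refine tendsto_of_tendsto_of_tendsto_of_le_of_le'
      (f := slope (fun t : ℝ => Real.tan (Real.pi * F t / 2)) 0)
      (hslope 1) (hslope (-1)) ?_ ?_
  · -- lower bound
    filter_upwards [Ioo_mem_nhdsGT_of_mem (Set.left_mem_Ico.mpr hd)] with t ht
    obtain ⟨ht0, htd⟩ := ht
    obtain ⟨hFl, hFu⟩ := hkey t ht0 htd
    have harg : t / (2 * d - t) < 1 := by
      rw [div_lt_one (by linarith)]; linarith
    have hF1 : F t < 1 := lt_of_le_of_lt hFu harg
    have hFt0 : 0 ≤ F t := le_trans (div_nonneg ht0.le (by linarith)) hFl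
    rw [slope_def_field, slope_def_field, hF0]
    simp only [mul_zero, zero_div, Real.tan_zero, sub_zero]
    gcongr
    have e1 : 2 * d + 1 * t = 2 * d + t := by ring
    rw [e1]
    refine tanmono _ _ ?_ ?_ ?_
    · exact div_nonneg (by positivity) (by positivity)
    · gcongr
    · nlinarith [mul_pos Real.pi_pos (sub_pos.mpr hF1)]
  · -- upper bound
    filter_upwards [Ioo_mem_nhdsGT_of_mem (Set.left_mem_Ico.mpr hd)] with t ht
    obtain ⟨ht0, htd⟩ := ht
    obtain ⟨hFl, hFu⟩ := hkey t ht0 htd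
    have harg : t / (2 * d - t) < 1 := by
      rw [div_lt_one (by linarith)]; linarith
    have hFt0 : 0 ≤ F t := le_trans (div_nonneg ht0.le (by linarith)) hFl
    rw [slope_def_field, slope_def_field, hF0]
    simp only [mul_zero, zero_div, Real.tan_zero, sub_zero]
    gcongr
    have e2 : 2 * d + (-1) * t = 2 * d - t := by ring
    rw [e2]
    refine tanmono _ _ (by positivity) ?_ ?_
    · gcongr
    · nlinarith [mul_pos Real.pi_pos (sub_pos.mpr harg)]
end

section
/- For every y ∈ G one has c_G(0,y) ≥ |y| / ( d_G(0)·(d_G(0) + |y|) ); moreover, if |y| < d_G(0), then c_G(0,y) ≤ |y| / ( d_G(0)·(d_G(0) − |y|) ). -/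
/-- Let `G ⊊ ℝⁿ` be a domain with `0 ∈ G`. For `y ∈ G`, with Cassinian
distance `c_G(0,y) = sup_{q ∈ ∂G} |0-y| / (|0-q| ⬝ |q-y|)`, one has
`c_G(0,y) ≥ |y| / (d_G 0 (d_G 0 + |y|))`; moreover, if `|y| < d_G 0` then
`c_G(0,y) ≤ |y| / (d_G 0 (d_G 0 - |y|))`. -/
theorem cassinian_bounds (n : ℕ) (hn : 0 < n)
    (G : Set (EuclideanSpace ℝ (Fin n)))
    (hGopen : IsOpen G) (hGconn : IsConnected G) (hGne : G ≠ Set.univ)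
    (h0 : (0 : EuclideanSpace ℝ (Fin n)) ∈ G)
    (y : EuclideanSpace ℝ (Fin n)) (hy : y ∈ G)
    (c : ℝ)
    (hc : c = sSup ((fun q => dist 0 y / (dist 0 q * dist q y)) '' frontier G)) :
    ‖y‖ / (Metric.infDist 0 Gᶜ * (Metric.infDist 0 Gᶜ + ‖y‖)) ≤ c ∧
      (‖y‖ < Metric.infDist 0 Gᶜ →
        c ≤ ‖y‖ / (Metric.infDist 0 Gᶜ * (Metric.infDist 0 Gᶜ - ‖y‖))) := by
  set D := Metric.infDist 0 Gᶜ with hDdef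
  have hGcne : Gᶜ.Nonempty := by
    rw [Set.nonempty_compl]; exact hGne
  have hGcc : IsClosed Gᶜ := hGopen.isClosed_compl
  have hD : 0 < D := (hGcc.notMem_iff_infDist_pos hGcne).1 (by simpa using h0)
  set Dy := Metric.infDist y Gᶜ with hDydef
  have hDy : 0 < Dy := (hGcc.notMem_iff_infDist_pos hGcne).1 (by simpa using hy)
  -- points closer to 0 than D are in G
  have hball : ∀ p : EuclideanSpace ℝ (Fin n), dist 0 p < D → p ∈ G := by
    intro p hp
    by_contra hpG
    exact absurd (Metric.infDist_le_dist_of_mem (s := Gᶜ) hpG) (not_le.2 hp)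
  -- minimizer
  obtain ⟨q₀, hq₀c, hq₀d⟩ := hGcc.exists_infDist_eq_dist hGcne 0
  rw [← hDdef] at hq₀d
  have hq₀norm : ‖q₀‖ = D := by rw [hq₀d, dist_zero_left]
  -- q₀ ∈ frontier G
  have hq₀f : q₀ ∈ frontier G := by
    constructor
    · rw [Metric.mem_closure_iff]
      intro ε hε
      set t : ℝ := min (ε / (2 * D)) (1 / 2) with ht
      have ht0 : 0 < t := lt_min (by positivity) (by norm_num)
      have ht1 : t ≤ 1 / 2 := min_le_right _ _
      refine ⟨(1 - t) • q₀, ?_, ?_⟩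
      · apply hball
        rw [dist_zero_left, norm_smul, hq₀norm, Real.norm_eq_abs,
          abs_of_nonneg (by linarith)]
        nlinarith
      · have : q₀ - (1 - t) • q₀ = t • q₀ := by
          rw [sub_smul, one_smul]; abel
        rw [dist_eq_norm, this, norm_smul, hq₀norm, Real.norm_eq_abs,
          abs_of_nonneg ht0.le]
        have h1 : t ≤ ε / (2 * D) := min_le_left _ _
        have : t * D ≤ ε / 2 := by
          rw [div_mul_eq_div_div] at h1
          calc t * D ≤ ε / 2 / D * D := by nlinarith
            _ = ε / 2 := by field_simp
        linarith
    · rw [hGopen.interior_eq]; exact hq₀c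
  -- frontier points are in Gᶜ
  have hfc : ∀ q ∈ frontier G, q ∈ Gᶜ := by
    intro q hq
    have := hq.2
    rw [hGopen.interior_eq] at this
    exact this
  set S := (fun q => dist 0 y / (dist 0 q * dist q y)) '' frontier G with hS
  have hSne : S.Nonempty := ⟨_, Set.mem_image_of_mem _ hq₀f⟩
  have hbound : ∀ v ∈ S, v ≤ ‖y‖ / (D * Dy) := by
    rintro v ⟨q, hq, rfl⟩
    have hqc := hfc q hq
    have h1 : D ≤ dist 0 q := Metric.infDist_le_dist_of_mem hqc
    have h2 : Dy ≤ dist q y := by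
      rw [dist_comm]; exact Metric.infDist_le_dist_of_mem hqc
    rw [dist_zero_left] at h1
    show dist 0 y / (dist 0 q * dist q y) ≤ _
    rw [dist_zero_left]
    apply div_le_div_of_nonneg_left (norm_nonneg y) (by positivity)
    rw [dist_zero_left]
    nlinarith
  have hbdd : BddAbove S := ⟨_, hbound⟩
  constructor
  · -- lower bound
    have hmem : dist 0 y / (dist 0 q₀ * dist q₀ y) ∈ S := Set.mem_image_of_mem _ hq₀f
    have hle : dist 0 y / (dist 0 q₀ * dist q₀ y) ≤ c := by
      rw [hc]; exact le_csSup hbdd hmem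
    have hqy : 0 < dist q₀ y := by
      have : Dy ≤ dist q₀ y := by
        rw [dist_comm]; exact Metric.infDist_le_dist_of_mem hq₀c
      linarith
    rw [dist_zero_left, dist_zero_left, hq₀norm] at hle
    refine le_trans ?_ hle
    
    have htri : dist q₀ y ≤ D + ‖y‖ := by
      calc dist q₀ y ≤ dist q₀ 0 + dist 0 y := dist_triangle _ _ _
        _ = D + ‖y‖ := by rw [dist_comm, ← hq₀d, dist_zero_left]
    apply div_le_div_of_nonneg_left (norm_nonneg y) (by positivity)
    nlinarith
  · -- upper bound
    intro hyD
    rw [hc]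
    apply csSup_le hSne
    rintro v ⟨q, hq, rfl⟩
    have hqc := hfc q hq
    have h1 : D ≤ dist 0 q := Metric.infDist_le_dist_of_mem hqc
    have h2 : ‖q‖ - ‖y‖ ≤ dist q y := by
      have := dist_triangle 0 y q
      rw [dist_zero_left, dist_zero_left, dist_comm y q] at this
      linarith
    rw [dist_zero_left] at h1
    show dist 0 y / (dist 0 q * dist q y) ≤ _
    rw [dist_zero_left]
    apply div_le_div_of_nonneg_left (norm_nonneg y) (mul_pos hD (by linarith))
    rw [dist_zero_left]
    nlinarith
end

section
/- Let n ≥ 2, let x ∈ ℝⁿ with x ≠ 0, and let G₂ = ℝⁿ \ S_{π/4,x,2x}. Then G₂ is a domain with 0 ∈ G₂, d_{G₂}(0) = |x|, and for every y = c·x with c ∈ [0,1) the Apollonian distance satisfies α_{G₂}(0,y) = log( |x| / (|x| − |y|) ) (the supremum over boundary pairs being approached but not attained, via boundary points tending to infinity). -/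
open Real InnerProductGeometry RealInnerProductSpace Filter Topology

section Aux

variable {E : Type*} [NormedAddCommGroup E] [InnerProductSpace ℝ E]

lemma angle_le_pi_div_four_iff' (x w : E) (hx : x ≠ 0) (hw : w ≠ 0) :
    InnerProductGeometry.angle x w ≤ π / 4 ↔ Real.sqrt 2 / 2 * (‖x‖ * ‖w‖) ≤ ⟪x, w⟫ := by
  have hcos : Real.cos (angle x w) = ⟪x, w⟫ / (‖x‖ * ‖w‖) := cos_angle x w
  have hpos : 0 < ‖x‖ * ‖w‖ := mul_pos (norm_pos_iff.2 hx) (norm_pos_iff.2 hw)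
  have h1 : angle x w ≤ π / 4 ↔ Real.sqrt 2 / 2 ≤ Real.cos (angle x w) := by
    constructor
    · intro h
      have := Real.cos_le_cos_of_nonneg_of_le_pi (angle_nonneg x w)
        (by linarith [Real.pi_pos]) h
      rwa [Real.cos_pi_div_four] at this
    · intro h
      by_contra hlt
      push_neg at hlt
      have := Real.strictAntiOn_cos ⟨by positivity, by linarith [Real.pi_pos]⟩
        ⟨angle_nonneg x w, angle_le_pi x w⟩ hlt
      rw [Real.cos_pi_div_four] at this
      linarith
  rw [h1, hcos, le_div_iff₀ hpos]

lemma mem_compl_iff' (x : E) (hx : x ≠ 0) (z : E) :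
    z ∈ (insert x {z | EuclideanGeometry.angle ((2 : ℝ) • x) x z ≤ π / 4})ᶜ ↔
      ⟪x, z - x⟫ < Real.sqrt 2 / 2 * (‖x‖ * ‖z - x‖) := by
  have hang : EuclideanGeometry.angle ((2 : ℝ) • x) x z = angle x (z - x) := by
    rw [EuclideanGeometry.angle]
    congr 1
    rw [vsub_eq_sub, two_smul]
    abel
  simp only [Set.mem_compl_iff, Set.mem_insert_iff, Set.mem_setOf_eq, not_or, hang]
  by_cases hz : z = x
  · subst hz
    simp [inner_zero_right]
  · have hw : z - x ≠ 0 := sub_ne_zero.2 hz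
    rw [angle_le_pi_div_four_iff' x (z - x) hx hw]
    simp [hz, not_le]

lemma cone_shift' (x w : E) (t : ℝ) (ht : 0 ≤ t)
    (h : ⟪x, w⟫ < Real.sqrt 2 / 2 * (‖x‖ * ‖w‖)) :
    ⟪x, w - t • x⟫ < Real.sqrt 2 / 2 * (‖x‖ * ‖w - t • x‖) := by
  set r : ℝ := Real.sqrt 2 / 2 with hr_def
  have hr : 0 < r := by positivity
  have hr2 : r * r = 1 / 2 := by
    rw [hr_def, div_mul_div_comm, Real.mul_self_sqrt (by norm_num)]
    norm_num
  have hinner : ⟪x, w - t • x⟫ = ⟪x, w⟫ - t * ‖x‖ ^ 2 := by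
    rw [inner_sub_right, real_inner_smul_right, real_inner_self_eq_norm_sq]
  have hs : ‖w - t • x‖ ^ 2 = ‖w‖ ^ 2 - 2 * (t * ⟪x, w⟫) + t ^ 2 * ‖x‖ ^ 2 := by
    rw [@norm_sub_sq_real E, real_inner_smul_right, norm_smul, real_inner_comm,
      mul_pow, Real.norm_eq_abs, abs_of_nonneg ht]
  rw [hinner]
  rcases lt_or_ge (⟪x, w⟫ - t * ‖x‖ ^ 2) 0 with hneg | hpos
  · exact hneg.trans_le (by positivity)
  · have ha : (0 : ℝ) ≤ ⟪x, w⟫ := by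
      nlinarith [mul_nonneg ht (sq_nonneg ‖x‖)]
    have ha2 : ⟪x, w⟫ * ⟪x, w⟫ < 1 / 2 * (‖x‖ ^ 2 * ‖w‖ ^ 2) := by
      have := mul_self_lt_mul_self ha h
      nlinarith [this, hr2]
    have hRHS : (r * (‖x‖ * ‖w - t • x‖)) ^ 2 =
        1 / 2 * ‖x‖ ^ 2 * (‖w‖ ^ 2 - 2 * (t * ⟪x, w⟫) + t ^ 2 * ‖x‖ ^ 2) := by
      rw [mul_pow, mul_pow, hs, sq, hr2]
      ring
    have hsq : (⟪x, w⟫ - t * ‖x‖ ^ 2) ^ 2 < (r * (‖x‖ * ‖w - t • x‖)) ^ 2 := by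
      rw [hRHS]
      nlinarith [ha2, hpos, ht, sq_nonneg (t * ‖x‖ ^ 2),
        mul_nonneg (mul_nonneg ht (sq_nonneg ‖x‖)) hpos]
    exact lt_of_pow_lt_pow_left₀ 2 (by positivity) hsq

end Aux

set_option linter.unusedSectionVars false
section Aux2
variable {E : Type*} [NormedAddCommGroup E] [InnerProductSpace ℝ E]

lemma norm_ge_of_cone' (x z : E)
    (h : Real.sqrt 2 / 2 * (‖x‖ * ‖z - x‖) ≤ ⟪x, z - x⟫) : ‖x‖ ≤ ‖z‖ := by
  have h0 : (0 : ℝ) ≤ ⟪x, z - x⟫ := le_trans (by positivity) h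
  have hz : ‖z‖ ^ 2 = ‖x‖ ^ 2 + 2 * ⟪x, z - x⟫ + ‖z - x‖ ^ 2 := by
    have : z = x + (z - x) := by abel
    rw [this, @norm_add_sq_real E]
    abel_nf
  have : ‖x‖ ^ 2 ≤ ‖z‖ ^ 2 := by nlinarith [sq_nonneg ‖z - x‖]
  exact le_of_pow_le_pow_left₀ two_ne_zero (norm_nonneg z) this

lemma param_calc' (x e : E) (hx : x ≠ 0) (he1 : ‖e‖ = 1) (he2 : ⟪x, e⟫ = 0) (p q : ℝ) :
    ⟪x, p • (‖x‖⁻¹ • x) + q • e⟫ = p * ‖x‖ ∧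
    ‖p • (‖x‖⁻¹ • x) + q • e‖ = Real.sqrt (p ^ 2 + q ^ 2) := by
  have hX : (0:ℝ) < ‖x‖ := norm_pos_iff.2 hx
  constructor
  · simp only [inner_add_right, real_inner_smul_right, he2, real_inner_self_eq_norm_sq,
      mul_zero, add_zero]
    field_simp
  · have h2 : ‖p • (‖x‖⁻¹ • x) + q • e‖ ^ 2 = p ^ 2 + q ^ 2 := by
      rw [@norm_add_sq_real E]
      have hperp : ⟪p • (‖x‖⁻¹ • x), q • e⟫ = (0:ℝ) := by
        rw [real_inner_smul_left, real_inner_smul_right, real_inner_smul_left, he2]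
        ring
      have hn1 : ‖p • (‖x‖⁻¹ • x)‖ = |p| := by
        rw [norm_smul, norm_smul, Real.norm_eq_abs, Real.norm_eq_abs,
          abs_of_nonneg (inv_nonneg.2 hX.le)]
        field_simp
      have hn2 : ‖q • e‖ = |q| := by
        rw [norm_smul, he1, Real.norm_eq_abs, mul_one]
      rw [hperp, hn1, hn2, sq_abs, sq_abs]
      ring
    rw [← h2, Real.sqrt_sq (norm_nonneg _)]

lemma param_lt' (x : E) (p q : ℝ) (hpq : p ^ 2 < q ^ 2 ∨ p < 0) (hX : 0 < ‖x‖) :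
    p * ‖x‖ < Real.sqrt 2 / 2 * (‖x‖ * Real.sqrt (p ^ 2 + q ^ 2)) := by
  rcases hpq with h | h
  · have hp2 : 2 * p ^ 2 < p ^ 2 + q ^ 2 := by linarith
    rcases lt_or_ge p 0 with hp | hp
    · have : 0 < Real.sqrt (p ^ 2 + q ^ 2) := Real.sqrt_pos.2 (by nlinarith [sq_nonneg p])
      nlinarith [Real.sqrt_nonneg 2, mul_pos hX this, Real.sq_sqrt (by norm_num : (2:ℝ) ≥ 0)]
    · have hlt : Real.sqrt (2 * p ^ 2) < Real.sqrt (p ^ 2 + q ^ 2) :=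
        Real.sqrt_lt_sqrt (by positivity) hp2
      have heq : Real.sqrt (2 * p ^ 2) = Real.sqrt 2 * p := by
        rw [Real.sqrt_mul (by norm_num), Real.sqrt_sq hp]
      rw [heq] at hlt
      have h22 : Real.sqrt 2 * Real.sqrt 2 = 2 := Real.mul_self_sqrt (by norm_num)
      calc p * ‖x‖ = Real.sqrt 2 / 2 * (‖x‖ * (Real.sqrt 2 * p)) := by
            field_simp
            linear_combination (-p) * (Real.sq_sqrt (by norm_num : (0:ℝ) ≤ 2))
        _ < Real.sqrt 2 / 2 * (‖x‖ * Real.sqrt (p ^ 2 + q ^ 2)) := by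
            have hr : (0:ℝ) < Real.sqrt 2 / 2 := by positivity
            exact mul_lt_mul_of_pos_left (mul_lt_mul_of_pos_left hlt hX) hr
  · have : (0:ℝ) ≤ Real.sqrt 2 / 2 * (‖x‖ * Real.sqrt (p ^ 2 + q ^ 2)) := by positivity
    nlinarith

lemma param_eq' (x : E) (p : ℝ) (hp : 0 ≤ p) :
    p * ‖x‖ = Real.sqrt 2 / 2 * (‖x‖ * Real.sqrt (p ^ 2 + p ^ 2)) := by
  have heq : Real.sqrt (p ^ 2 + p ^ 2) = Real.sqrt 2 * p := by
    rw [show p ^ 2 + p ^ 2 = 2 * p ^ 2 by ring, Real.sqrt_mul (by norm_num), Real.sqrt_sq hp]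
  rw [heq]
  have h22 : Real.sqrt 2 * Real.sqrt 2 = 2 := Real.mul_self_sqrt (by norm_num)
  field_simp
  linear_combination (-(‖x‖ * p)) * (Real.sq_sqrt (by norm_num : (0:ℝ) ≤ 2))
end Aux2

set_option maxHeartbeats 1000000 in
/-- Let `n ≥ 2`, `x ≠ 0`, and let
`G₂ = ℝⁿ \ S_{π/4, x, 2x}` where `S_{α,x,y} = {x} ∪ {z : ∠(y,x,z) ≤ α}` is an angular
domain. Then `G₂` is a domain (open and connected) with `0 ∈ G₂`, `d_{G₂}(0) = |x|`,
and for every `y = c • x` with `0 ≤ c < 1`, the Apollonian distance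
`α_{G₂}(0,y) = sup_{a,b ∈ ∂G₂} log ((|a-y| ⬝ |b|)/(|a| ⬝ |b-y|))` equals
`log (|x| / (|x| - |y|))`. -/
theorem apollonian_in_angular_complement (n : ℕ) (hn : 2 ≤ n)
    (x : EuclideanSpace ℝ (Fin n)) (hx : x ≠ 0)
    (G₂ : Set (EuclideanSpace ℝ (Fin n)))
    (hG₂ : G₂ =
      (insert x {z | EuclideanGeometry.angle ((2 : ℝ) • x) x z ≤ Real.pi / 4})ᶜ) :
    IsOpen G₂ ∧ IsConnected G₂ ∧ (0 : EuclideanSpace ℝ (Fin n)) ∈ G₂ ∧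
      Metric.infDist 0 G₂ᶜ = ‖x‖ ∧
      ∀ c : ℝ, 0 ≤ c → c < 1 →
        sSup {L : ℝ | ∃ a ∈ frontier G₂, ∃ b ∈ frontier G₂,
            L = Real.log ((dist a (c • x) * dist b 0) / (dist a 0 * dist b (c • x)))} =
          Real.log (‖x‖ / (‖x‖ - ‖c • x‖)) := by
  have hX : (0:ℝ) < ‖x‖ := norm_pos_iff.2 hx
  have hmem : ∀ z, z ∈ G₂ ↔ ⟪x, z - x⟫ < Real.sqrt 2 / 2 * (‖x‖ * ‖z - x‖) := by
    intro z
    rw [hG₂]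
    exact mem_compl_iff' x hx z
  have hmemc : ∀ z, z ∈ G₂ᶜ ↔ Real.sqrt 2 / 2 * (‖x‖ * ‖z - x‖) ≤ ⟪x, z - x⟫ := by
    intro z
    rw [Set.mem_compl_iff, hmem, not_lt]
  -- openness
  have hopen : IsOpen G₂ := by
    have hset : G₂ = {z | ⟪x, z - x⟫ < Real.sqrt 2 / 2 * (‖x‖ * ‖z - x‖)} :=
      Set.ext hmem
    rw [hset]
    exact isOpen_lt (continuous_const.inner (continuous_id.sub continuous_const))
      (continuous_const.mul (continuous_const.mul
        ((continuous_id.sub continuous_const).norm)))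
  -- zero membership
  have h0 : (0 : EuclideanSpace ℝ (Fin n)) ∈ G₂ := by
    rw [hmem]
    have h1 : ⟪x, (0 : EuclideanSpace ℝ (Fin n)) - x⟫ = -‖x‖^2 := by
      rw [zero_sub, inner_neg_right, real_inner_self_eq_norm_sq]
    rw [h1]
    have : (0:ℝ) ≤ Real.sqrt 2 / 2 * (‖x‖ * ‖(0 : EuclideanSpace ℝ (Fin n)) - x‖) := by
      positivity
    nlinarith
  -- norm lower bound on complement
  have hnormc : ∀ z ∈ G₂ᶜ, ‖x‖ ≤ ‖z‖ := fun z hz => norm_ge_of_cone' x z ((hmemc z).1 hz)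
  have hxc : x ∈ G₂ᶜ := by
    rw [hmemc]
    simp
  -- infDist
  have hinf : Metric.infDist 0 G₂ᶜ = ‖x‖ := by
    apply le_antisymm
    · have := Metric.infDist_le_dist_of_mem (x := (0 : EuclideanSpace ℝ (Fin n))) hxc
      rwa [dist_zero_left] at this
    · by_contra hlt
      push_neg at hlt
      obtain ⟨z, hz, hdz⟩ := (Metric.infDist_lt_iff ⟨x, hxc⟩).1 hlt
      rw [dist_zero_left] at hdz
      exact absurd (hnormc z hz) (by linarith)
  -- perpendicular unit vector
  obtain ⟨e, he1, he2⟩ : ∃ e : EuclideanSpace ℝ (Fin n), ‖e‖ = 1 ∧ ⟪x, e⟫ = 0 := by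
    have hne : (Submodule.span ℝ {x})ᗮ ≠ ⊥ := by
      intro hcontra
      have htop : Submodule.span ℝ {x} = ⊤ := Submodule.orthogonal_eq_bot_iff.1 hcontra
      have h1 : Module.finrank ℝ (Submodule.span ℝ {x}) = 1 := finrank_span_singleton hx
      rw [htop, finrank_top] at h1
      rw [finrank_euclideanSpace_fin] at h1
      omega
    obtain ⟨v, hv, hv0⟩ := Submodule.exists_mem_ne_zero_of_ne_bot hne
    have hvx : ⟪x, v⟫ = 0 :=
      (Submodule.mem_orthogonal _ _).1 hv x (Submodule.mem_span_singleton_self x)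
    refine ⟨‖v‖⁻¹ • v, ?_, ?_⟩
    · rw [norm_smul, Real.norm_eq_abs, abs_of_nonneg (inv_nonneg.2 (norm_nonneg v))]
      exact inv_mul_cancel₀ (norm_ne_zero_iff.2 hv0)
    · rw [real_inner_smul_right, hvx, mul_zero]
  set u : EuclideanSpace ℝ (Fin n) := ‖x‖⁻¹ • x with hu_def
  -- frontier family
  have hfr : ∀ p : ℝ, 0 ≤ p → x + (p • u + p • e) ∈ frontier G₂ := by
    intro p hp
    rw [hopen.frontier_eq, Set.mem_diff]
    constructor
    · apply mem_closure_of_tendsto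
        (f := fun j : ℕ => x + (p • u + (p + 1/(j+1)) • e)) (b := atTop)
      · have h1 : Tendsto (fun j : ℕ => p + 1/(j+1)) atTop (𝓝 p) := by
          simpa using tendsto_const_nhds.add (tendsto_one_div_add_atTop_nhds_zero_nat (𝕜 := ℝ))
        exact tendsto_const_nhds.add (tendsto_const_nhds.add (h1.smul_const e))
      · refine Eventually.of_forall fun j => ?_
        rw [hmem, add_sub_cancel_left]
        obtain ⟨hc1, hc2⟩ := param_calc' x e hx he1 he2 p (p + 1/(j+1))
        rw [hc1, hc2]
        apply param_lt' x p (p + 1/(j+1)) _ hX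
        left
        have : (0:ℝ) < 1/((j:ℝ)+1) := by positivity
        nlinarith
    · intro hcontra
      rw [hmem, add_sub_cancel_left] at hcontra
      obtain ⟨hc1, hc2⟩ := param_calc' x e hx he1 he2 p p
      rw [hc1, hc2] at hcontra
      exact absurd hcontra (not_lt.2 (le_of_eq (param_eq' x p hp).symm))
  -- connectivity
  have hHsub : {z : EuclideanSpace ℝ (Fin n) | ⟪x, z⟫ < ‖x‖^2} ⊆ G₂ := by
    intro z hz
    rw [hmem]
    have h1 : ⟪x, z - x⟫ = ⟪x, z⟫ - ‖x‖^2 := by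
      rw [inner_sub_right, real_inner_self_eq_norm_sq]
    rw [h1]
    have h2 : ⟪x, z⟫ - ‖x‖^2 < 0 := sub_neg.2 hz
    calc ⟪x, z⟫ - ‖x‖^2 < 0 := h2
      _ ≤ _ := by positivity
  have hHconv : Convex ℝ {z : EuclideanSpace ℝ (Fin n) | ⟪x, z⟫ < ‖x‖^2} :=
    convex_halfSpace_lt ⟨fun a b => inner_add_right x a b, fun r a => real_inner_smul_right x a r⟩ _
  have h0H : (0 : EuclideanSpace ℝ (Fin n)) ∈ {z : EuclideanSpace ℝ (Fin n) | ⟪x, z⟫ < ‖x‖^2} := by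
    simp only [Set.mem_setOf_eq, inner_zero_right]
    positivity
  have hpath : IsPathConnected G₂ := by
    refine ⟨0, h0, fun {z} hz => JoinedIn.symm ?_⟩
    set t : ℝ := max (⟪x, z⟫ / ‖x‖^2) 0 with ht_def
    have ht0 : (0:ℝ) ≤ t := le_max_right _ _
    have hz' : z - t • x ∈ {z : EuclideanSpace ℝ (Fin n) | ⟪x, z⟫ < ‖x‖^2} := by
      simp only [Set.mem_setOf_eq, inner_sub_right, real_inner_smul_right,
        real_inner_self_eq_norm_sq]
      have h1 : ⟪x, z⟫ / ‖x‖^2 ≤ t := le_max_left _ _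
      have h2 : ⟪x, z⟫ ≤ t * ‖x‖^2 := by
        rw [div_le_iff₀ (by positivity)] at h1
        linarith
      nlinarith
    have hseg : segment ℝ z (z - t • x) ⊆ G₂ := by
      intro w hw
      rw [segment_eq_image'] at hw
      obtain ⟨θ, hθ, rfl⟩ := hw
      have hθt : (0:ℝ) ≤ θ * t := mul_nonneg hθ.1 ht0
      have heq : z + θ • (z - t • x - z) - x = (z - x) - (θ * t) • x := by
        module
      rw [hmem, heq]
      exact cone_shift' x (z - x) (θ * t) hθt ((hmem z).1 hz)
    have hj1 : JoinedIn G₂ z (z - t • x) := by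
      have hpc : IsPathConnected (segment ℝ z (z - t • x)) :=
        (convex_segment z (z - t • x)).isPathConnected ⟨z, left_mem_segment ℝ _ _⟩
      exact (hpc.joinedIn z (left_mem_segment ℝ _ _) _ (right_mem_segment ℝ _ _)).mono hseg
    have hj2 : JoinedIn G₂ (z - t • x) 0 := by
      have hpc : IsPathConnected {z : EuclideanSpace ℝ (Fin n) | ⟪x, z⟫ < ‖x‖^2} :=
        hHconv.isPathConnected ⟨0, h0H⟩
      exact (hpc.joinedIn _ hz' 0 h0H).mono hHsub
    exact hj1.trans hj2
  refine ⟨hopen, hpath.isConnected, h0, hinf, ?_⟩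
  intro c hc0 hc1
  have hyn : ‖c • x‖ = c * ‖x‖ := by
    rw [norm_smul, Real.norm_eq_abs, abs_of_nonneg hc0]
  have hKd : (0:ℝ) < ‖x‖ - ‖c • x‖ := by
    rw [hyn]
    nlinarith
  have hKpos : (0:ℝ) < ‖x‖ / (‖x‖ - ‖c • x‖) := div_pos hX hKd
  have hxy : ‖x - c • x‖ = ‖x‖ - ‖c • x‖ := by
    rw [show x - c • x = (1 - c) • x by module, norm_smul, Real.norm_eq_abs,
      abs_of_nonneg (by linarith : (0:ℝ) ≤ 1 - c), hyn]
    ring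
  have hyG : c • x ∈ G₂ := by
    rw [hmem]
    have h1 : ⟪x, c • x - x⟫ = (c - 1) * ‖x‖^2 := by
      rw [inner_sub_right, real_inner_smul_right, real_inner_self_eq_norm_sq]
      ring
    rw [h1]
    have h2 : (c - 1) * ‖x‖^2 < 0 := by nlinarith
    calc (c - 1) * ‖x‖^2 < 0 := h2
      _ ≤ _ := by positivity
  have hfrsub : frontier G₂ ⊆ G₂ᶜ := by
    rw [hopen.frontier_eq]
    exact fun z hz => hz.2
  -- inner product lower bound on complement
  have hinnerc : ∀ z ∈ G₂ᶜ, ‖x‖^2 ≤ ⟪x, z⟫ := by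
    intro z hz
    have h1 := (hmemc z).1 hz
    have h2 : (0:ℝ) ≤ ⟪x, z - x⟫ := le_trans (by positivity) h1
    rw [inner_sub_right, real_inner_self_eq_norm_sq] at h2
    linarith
  -- upper bound
  have hub : ∀ L ∈ {L : ℝ | ∃ a ∈ frontier G₂, ∃ b ∈ frontier G₂,
      L = Real.log ((dist a (c • x) * dist b 0) / (dist a 0 * dist b (c • x)))},
      L ≤ Real.log (‖x‖ / (‖x‖ - ‖c • x‖)) := by
    rintro L ⟨a, ha, b, hb, rfl⟩
    have haC : a ∈ G₂ᶜ := hfrsub ha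
    have hbC : b ∈ G₂ᶜ := hfrsub hb
    have hna : ‖x‖ ≤ ‖a‖ := hnormc a haC
    have hnb : ‖x‖ ≤ ‖b‖ := hnormc b hbC
    have hia : ‖x‖^2 ≤ ⟪x, a⟫ := hinnerc a haC
    have h1 : ‖a - c • x‖ ≤ ‖a‖ := by
      have hsq : ‖a - c • x‖^2 ≤ ‖a‖^2 := by
        rw [@norm_sub_sq_real (EuclideanSpace ℝ (Fin n)), real_inner_smul_right, hyn,
          real_inner_comm]
        nlinarith [mul_pow c ‖x‖ 2]
      exact le_of_pow_le_pow_left₀ two_ne_zero (norm_nonneg a) hsq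
    have h2 : (1 - c) * ‖b‖ ≤ ‖b - c • x‖ := by
      have h3 : ‖b‖ - ‖c • x‖ ≤ ‖b - c • x‖ := norm_sub_norm_le b (c • x)
      have h4 : c * ‖x‖ ≤ c * ‖b‖ := by nlinarith
      rw [hyn] at h3
      nlinarith
    have hbpos : (0:ℝ) < ‖b - c • x‖ := lt_of_lt_of_le (by nlinarith) h2
    have hapos : (0:ℝ) < ‖a‖ := lt_of_lt_of_le hX hna
    have hanepos : (0:ℝ) < ‖a - c • x‖ := by
      rw [norm_pos_iff, sub_ne_zero]
      intro hcontra
      rw [hcontra] at haC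
      exact haC hyG
    simp only [dist_eq_norm, sub_zero]
    have hratio : ‖a - c • x‖ * ‖b‖ / (‖a‖ * ‖b - c • x‖) ≤ ‖x‖ / (‖x‖ - ‖c • x‖) := by
      rw [div_le_div_iff₀ (mul_pos hapos hbpos) hKd]
      have hmm : ‖a - c • x‖ * ((1 - c) * ‖b‖) ≤ ‖a‖ * ‖b - c • x‖ :=
        mul_le_mul h1 h2 (mul_nonneg (by linarith) (norm_nonneg b)) (norm_nonneg a)
      have := mul_le_mul_of_nonneg_right hmm hX.le
      rw [hyn]
      nlinarith
    exact Real.log_le_log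
      (div_pos (mul_pos hanepos (lt_of_lt_of_le hX hnb)) (mul_pos hapos hbpos)) hratio
  have hxF : x ∈ frontier G₂ := by
    have := hfr 0 le_rfl
    simpa using this
  have hTne : {L : ℝ | ∃ a ∈ frontier G₂, ∃ b ∈ frontier G₂,
      L = Real.log ((dist a (c • x) * dist b 0) / (dist a 0 * dist b (c • x)))}.Nonempty :=
    ⟨_, x, hxF, x, hxF, rfl⟩
  have hbdd : BddAbove {L : ℝ | ∃ a ∈ frontier G₂, ∃ b ∈ frontier G₂,
      L = Real.log ((dist a (c • x) * dist b 0) / (dist a 0 * dist b (c • x)))} :=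
    ⟨Real.log (‖x‖ / (‖x‖ - ‖c • x‖)), fun L hL => hub L hL⟩
  -- sequence approaching the sup
  set A : ℕ → EuclideanSpace ℝ (Fin n) := fun k => x + ((k:ℝ) • u + (k:ℝ) • e) with hA_def
  have hAfr : ∀ k, A k ∈ frontier G₂ := fun k => hfr k (Nat.cast_nonneg k)
  have hAnorm : ∀ k, ‖x‖ ≤ ‖A k‖ := fun k => hnormc _ (hfrsub (hAfr k))
  have hAlow : ∀ k : ℕ, (k:ℝ) - ‖x‖ ≤ ‖A k‖ := by
    intro k
    have h1 : ‖(k:ℝ) • u + (k:ℝ) • e‖ = Real.sqrt ((k:ℝ)^2 + (k:ℝ)^2) :=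
      (param_calc' x e hx he1 he2 (k:ℝ) (k:ℝ)).2
    have h2 : (k:ℝ) ≤ Real.sqrt ((k:ℝ)^2 + (k:ℝ)^2) := by
      have := Real.sqrt_le_sqrt (by nlinarith [sq_nonneg (k:ℝ)] :
        (k:ℝ)^2 ≤ (k:ℝ)^2 + (k:ℝ)^2)
      rwa [Real.sqrt_sq (Nat.cast_nonneg k)] at this
    have h3 : ‖(k:ℝ) • u + (k:ℝ) • e‖ - ‖x‖ ≤ ‖A k‖ := by
      have hns := norm_sub_le (A k) x
      have heq2 : A k - x = (k:ℝ) • u + (k:ℝ) • e := by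
        rw [hA_def]
        module
      rw [heq2] at hns
      linarith
    rw [h1] at h3
    linarith
  have hAtop : Tendsto (fun k => ‖A k‖) atTop atTop := by
    apply tendsto_atTop_mono hAlow
    exact tendsto_atTop_add_const_right atTop (-‖x‖) tendsto_natCast_atTop_atTop
  have hq : Tendsto (fun k => ‖A k - c • x‖ / ‖A k‖) atTop (𝓝 1) := by
    have hb : ∀ k, |‖A k - c • x‖ / ‖A k‖ - 1| ≤ ‖c • x‖ / ‖A k‖ := by
      intro k
      have hApos : (0:ℝ) < ‖A k‖ := lt_of_lt_of_le hX (hAnorm k)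
      have heq3 : ‖A k - c • x‖ / ‖A k‖ - 1 = (‖A k - c • x‖ - ‖A k‖) / ‖A k‖ := by
        field_simp
      rw [heq3, abs_div, abs_of_pos hApos, div_le_div_iff_of_pos_right hApos]
      have := abs_norm_sub_norm_le (A k - c • x) (A k)
      simpa using this
    have h0' : Tendsto (fun k => ‖c • x‖ / ‖A k‖) atTop (𝓝 0) :=
      Tendsto.div_atTop tendsto_const_nhds hAtop
    have habs : Tendsto (fun k => |‖A k - c • x‖ / ‖A k‖ - 1|) atTop (𝓝 0) :=
      squeeze_zero (fun k => abs_nonneg _) hb h0'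
    have hzero : Tendsto (fun k => ‖A k - c • x‖ / ‖A k‖ - 1) atTop (𝓝 0) := by
      have hneg : Tendsto (fun k => -|‖A k - c • x‖ / ‖A k‖ - 1|) atTop (𝓝 0) := by
        simpa using habs.neg
      exact tendsto_of_tendsto_of_tendsto_of_le_of_le hneg habs
        (fun k => neg_abs_le _) (fun k => le_abs_self _)
    have := hzero.add (tendsto_const_nhds (x := (1:ℝ)))
    simpa using this
  have hTL : Tendsto (fun k => Real.log ((dist (A k) (c • x) * dist x 0) /
      (dist (A k) 0 * dist x (c • x)))) atTop (𝓝 (Real.log (‖x‖ / (‖x‖ - ‖c • x‖)))) := by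
    have heq4 : ∀ k, (dist (A k) (c • x) * dist x 0) / (dist (A k) 0 * dist x (c • x)) =
        (‖A k - c • x‖ / ‖A k‖) * (‖x‖ / ‖x - c • x‖) := by
      intro k
      simp only [dist_eq_norm, sub_zero]
      ring
    have hrat : Tendsto (fun k => (dist (A k) (c • x) * dist x 0) /
        (dist (A k) 0 * dist x (c • x))) atTop (𝓝 (‖x‖ / (‖x‖ - ‖c • x‖))) := by
      simp only [heq4]
      rw [hxy]
      simpa using hq.mul_const (‖x‖ / (‖x‖ - ‖c • x‖))
    exact hrat.log (ne_of_gt hKpos)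
  have hge : Real.log (‖x‖ / (‖x‖ - ‖c • x‖)) ≤ sSup {L : ℝ | ∃ a ∈ frontier G₂,
      ∃ b ∈ frontier G₂,
      L = Real.log ((dist a (c • x) * dist b 0) / (dist a 0 * dist b (c • x)))} :=
    le_of_tendsto hTL (Eventually.of_forall fun k =>
      le_csSup hbdd ⟨A k, hAfr k, x, hxF, rfl⟩)
  exact le_antisymm (csSup_le hTne hub) hge
end

section
/- Let n ≥ 2, let x ∈ ℝⁿ with x ≠ 0, and let G′ = ℝⁿ \ ( S_{π/4,−x,−2x} ∪ S_{π/4,x,2x} ). Then G′ is a domain with 0 ∈ G′, d_{G′}(0) = |x|, and for every y = c·x with c ∈ [0,1) the Apollonian distance satisfies α_{G′}(0,y) = log( (|x| + |y|) / (|x| − |y|) ), the supremum being attained at the boundary pair a = −x, b = x. -/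
open Real Set Metric
open scoped RealInnerProductSpace

namespace ApolloAux

lemma sq_le_helper {a b : ℝ} (ha : 0 ≤ a) : a ≤ b ↔ 0 ≤ b ∧ a ^ 2 ≤ b ^ 2 := by
  constructor
  · intro h
    exact ⟨ha.trans h, by nlinarith⟩
  · rintro ⟨hb, h2⟩
    nlinarith

variable {n : ℕ}

lemma cone_eq (v : EuclideanSpace ℝ (Fin n)) (hv : v ≠ 0) :
    (insert v {z : EuclideanSpace ℝ (Fin n) |
        EuclideanGeometry.angle ((2 : ℝ) • v) v z ≤ π / 4}) =
      {z : EuclideanSpace ℝ (Fin n) |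
        Real.sqrt 2 / 2 * (‖v‖ * ‖z - v‖) ≤ ⟪v, z - v⟫} := by
  ext z
  by_cases hz : z = v
  · subst hz
    simp [mem_insert_iff]
  · have hzv : z - v ≠ 0 := sub_ne_zero.2 hz
    simp only [mem_insert_iff, mem_setOf_eq, hz, false_or]
    have hang : EuclideanGeometry.angle ((2 : ℝ) • v) v z
        = InnerProductGeometry.angle v (z - v) := by
      unfold EuclideanGeometry.angle
      congr 1
      show (2 : ℝ) • v - v = v
      module
    rw [hang]
    have hmem1 : π / 4 ∈ Icc 0 π := ⟨by positivity, by linarith [pi_pos]⟩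
    have hmem2 : InnerProductGeometry.angle v (z - v) ∈ Icc 0 π :=
      ⟨InnerProductGeometry.angle_nonneg _ _, InnerProductGeometry.angle_le_pi _ _⟩
    have h1 : InnerProductGeometry.angle v (z - v) ≤ π / 4 ↔
        Real.cos (π / 4) ≤ Real.cos (InnerProductGeometry.angle v (z - v)) :=
      (Real.strictAntiOn_cos.le_iff_ge hmem1 hmem2).symm
    rw [h1, Real.cos_pi_div_four, InnerProductGeometry.cos_angle]
    have hN : 0 < ‖v‖ * ‖z - v‖ := by
      have := norm_pos_iff.2 hv
      have := norm_pos_iff.2 hzv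
      positivity
    rw [le_div_iff₀ hN]

lemma cone_iff (v : EuclideanSpace ℝ (Fin n)) (hv : v ≠ 0) (z : EuclideanSpace ℝ (Fin n)) :
    Real.sqrt 2 / 2 * (‖v‖ * ‖z - v‖) ≤ ⟪v, z - v⟫ ↔
      ‖v‖ ^ 2 + ‖v‖ * Real.sqrt (‖z‖ ^ 2 - ⟪v, z⟫ ^ 2 / ‖v‖ ^ 2) ≤ ⟪v, z⟫ := by
  have hr : 0 < ‖v‖ := norm_pos_iff.2 hv
  set r : ℝ := ‖v‖ with hrdef
  set p : ℝ := ⟪v, z⟫ with hpdef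
  have hiz : ⟪v, z - v⟫ = p - r ^ 2 := by
    rw [inner_sub_right, real_inner_self_eq_norm_sq]
  have hCS : |p| ≤ r * ‖z‖ := abs_real_inner_le_norm v z
  have hD : 0 ≤ ‖z‖ ^ 2 - p ^ 2 / r ^ 2 := by
    rw [sub_nonneg, div_le_iff₀ (by positivity)]
    nlinarith [abs_nonneg p, sq_abs p]
  set q : ℝ := Real.sqrt (‖z‖ ^ 2 - p ^ 2 / r ^ 2) with hqdef
  have hq0 : 0 ≤ q := Real.sqrt_nonneg _
  have hq2 : q ^ 2 = ‖z‖ ^ 2 - p ^ 2 / r ^ 2 := Real.sq_sqrt hD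
  have hnz : ‖z - v‖ ^ 2 = ‖z‖ ^ 2 - 2 * p + r ^ 2 := by
    rw [norm_sub_sq_real, real_inner_comm]
  have hsq2 : (Real.sqrt 2 / 2) ^ 2 = 1 / 2 := by
    rw [div_pow, Real.sq_sqrt (by norm_num : (0:ℝ) ≤ 2)]; norm_num
  have ha1 : 0 ≤ Real.sqrt 2 / 2 * (r * ‖z - v‖) := by positivity
  have ha2 : 0 ≤ r * q := by positivity
  have e1 : (r * q) ^ 2 = r ^ 2 * ‖z‖ ^ 2 - p ^ 2 := by
    rw [mul_pow, hq2]; field_simp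
  have e2 : (Real.sqrt 2 / 2 * (r * ‖z - v‖)) ^ 2
      = 1 / 2 * (r ^ 2 * (‖z‖ ^ 2 - 2 * p + r ^ 2)) := by
    rw [mul_pow, hsq2, mul_pow, hnz]
  have e3 : 2 * (p - r ^ 2) ^ 2 - r ^ 2 * (‖z‖ ^ 2 - 2 * p + r ^ 2)
      = (p - r ^ 2) ^ 2 - (r ^ 2 * ‖z‖ ^ 2 - p ^ 2) := by ring
  rw [hiz]
  constructor
  · intro h
    have h0 : 0 ≤ p - r ^ 2 := ha1.trans h
    have h1 : (Real.sqrt 2 / 2 * (r * ‖z - v‖)) ^ 2 ≤ (p - r ^ 2) ^ 2 :=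
      pow_le_pow_left₀ ha1 h 2
    have h2 : (r * q) ^ 2 ≤ (p - r ^ 2) ^ 2 := by linarith
    have := (sq_le_helper ha2).2 ⟨h0, h2⟩
    linarith
  · intro h
    have h0 : 0 ≤ p - r ^ 2 := by linarith
    have hle : r * q ≤ p - r ^ 2 := by linarith
    have h2 : (r * q) ^ 2 ≤ (p - r ^ 2) ^ 2 := pow_le_pow_left₀ ha2 hle 2
    exact (sq_le_helper ha1).2 ⟨h0, by linarith⟩

lemma mem_iff (x : EuclideanSpace ℝ (Fin n)) (hx : x ≠ 0)
    (z : EuclideanSpace ℝ (Fin n)) :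
    z ∈ ((insert (-x) {z : EuclideanSpace ℝ (Fin n) |
          EuclideanGeometry.angle (-((2 : ℝ) • x)) (-x) z ≤ π / 4}) ∪
        (insert x {z : EuclideanSpace ℝ (Fin n) |
          EuclideanGeometry.angle ((2 : ℝ) • x) x z ≤ π / 4}))ᶜ ↔
      |⟪x, z⟫| < ‖x‖ ^ 2 + ‖x‖ * Real.sqrt (‖z‖ ^ 2 - ⟪x, z⟫ ^ 2 / ‖x‖ ^ 2) := by
  have hx' : (-x) ≠ 0 := neg_ne_zero.2 hx
  have h2 : -((2 : ℝ) • x) = (2 : ℝ) • (-x) := (smul_neg _ _).symm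
  rw [mem_compl_iff, mem_union, h2, cone_eq (-x) hx', cone_eq x hx]
  simp only [mem_setOf_eq]
  rw [cone_iff (-x) hx', cone_iff x hx, inner_neg_left, norm_neg, neg_sq, not_or]
  constructor
  · rintro ⟨h1, h2⟩
    rw [abs_lt]
    push_neg at h1 h2
    constructor <;> linarith
  · intro h
    rw [abs_lt] at h
    constructor <;> · rw [not_le]; linarith [h.1, h.2]

end ApolloAux



set_option maxHeartbeats 1000000 in
/-- Let `n ≥ 2`, `x ≠ 0`, and let
`G' = ℝⁿ \ (S_{π/4, -x, -2x} ∪ S_{π/4, x, 2x})` where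
`S_{α,x,y} = {x} ∪ {z : ∠(y,x,z) ≤ α}` is an angular domain. Then `G'` is a domain
(open and connected) with `0 ∈ G'`, `d_{G'}(0) = |x|`, and for every `y = c • x` with
`0 ≤ c < 1`, the Apollonian distance
`α_{G'}(0,y) = sup_{a,b ∈ ∂G'} log ((|a-y| ⬝ |b|)/(|a| ⬝ |b-y|))` equals
`log ((|x| + |y|) / (|x| - |y|))`, the supremum being attained at the boundary pair
`a = -x`, `b = x`. -/
theorem apollonian_in_double_angular_complement (n : ℕ) (hn : 2 ≤ n)
    (x : EuclideanSpace ℝ (Fin n)) (hx : x ≠ 0)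
    (G' : Set (EuclideanSpace ℝ (Fin n)))
    (hG' : G' =
      ((insert (-x) {z | EuclideanGeometry.angle (-((2 : ℝ) • x)) (-x) z ≤ Real.pi / 4}) ∪
        (insert x {z | EuclideanGeometry.angle ((2 : ℝ) • x) x z ≤ Real.pi / 4}))ᶜ) :
    IsOpen G' ∧ IsConnected G' ∧ (0 : EuclideanSpace ℝ (Fin n)) ∈ G' ∧
      Metric.infDist 0 G'ᶜ = ‖x‖ ∧
      ∀ c : ℝ, 0 ≤ c → c < 1 →
        sSup {L : ℝ | ∃ a ∈ frontier G', ∃ b ∈ frontier G',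
            L = Real.log ((dist a (c • x) * dist b 0) / (dist a 0 * dist b (c • x)))} =
          Real.log ((‖x‖ + ‖c • x‖) / (‖x‖ - ‖c • x‖)) ∧
        (-x) ∈ frontier G' ∧ x ∈ frontier G' ∧
        Real.log ((dist (-x) (c • x) * dist x 0) / (dist (-x) 0 * dist x (c • x))) =
          Real.log ((‖x‖ + ‖c • x‖) / (‖x‖ - ‖c • x‖)) := by
  have hr : 0 < ‖x‖ := norm_pos_iff.2 hx
  set r : ℝ := ‖x‖ with hrdef
  have hmem : ∀ z, z ∈ G' ↔
      |⟪x, z⟫| < r ^ 2 + r * Real.sqrt (‖z‖ ^ 2 - ⟪x, z⟫ ^ 2 / r ^ 2) := by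
    intro z
    rw [hG']
    exact ApolloAux.mem_iff x hx z
  -- openness
  have hPcont : Continuous fun z : EuclideanSpace ℝ (Fin n) => (⟪x, z⟫ : ℝ) :=
    Continuous.inner continuous_const continuous_id
  have hopen : IsOpen G' := by
    have : G' = {z : EuclideanSpace ℝ (Fin n) |
        |⟪x, z⟫| < r ^ 2 + r * Real.sqrt (‖z‖ ^ 2 - ⟪x, z⟫ ^ 2 / r ^ 2)} := Set.ext hmem
    rw [this]
    exact isOpen_lt hPcont.abs (continuous_const.add (continuous_const.mul
      (Real.continuous_sqrt.comp (((continuous_norm.pow 2)).sub ((hPcont.pow 2).div_const _)))))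
  -- zero membership
  have h0mem : (0 : EuclideanSpace ℝ (Fin n)) ∈ G' := by
    rw [hmem]
    have h1 : ‖(0 : EuclideanSpace ℝ (Fin n))‖ ^ 2 -
        (⟪x, (0 : EuclideanSpace ℝ (Fin n))⟫ : ℝ) ^ 2 / r ^ 2 = 0 := by
      simp
    rw [h1, Real.sqrt_zero, mul_zero, add_zero, inner_zero_right, abs_zero]
    positivity
  -- connectedness
  have hconn : IsConnected G' := by
    refine IsPathConnected.isConnected ⟨0, h0mem, fun {z} hz => JoinedIn.of_segment_subset ?_⟩
    rintro u ⟨a, b, ha, hb, hab, rfl⟩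
    have hz' := (hmem z).1 hz
    have heq : a • (0 : EuclideanSpace ℝ (Fin n)) + b • z = b • z := by simp
    rw [heq, hmem]
    rcases eq_or_lt_of_le hb with hb0 | hb0
    · rw [← hb0]
      have h1 : ‖(0:ℝ) • z‖ ^ 2 - (⟪x, (0:ℝ) • z⟫ : ℝ) ^ 2 / r ^ 2 = 0 := by
        simp
      rw [h1]
      simp only [Real.sqrt_zero, mul_zero, add_zero, zero_smul, inner_zero_right, abs_zero]
      positivity
    · have hb1 : b ≤ 1 := by linarith
      have key : ‖b • z‖ ^ 2 - (⟪x, b • z⟫ : ℝ) ^ 2 / r ^ 2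
          = b ^ 2 * (‖z‖ ^ 2 - ⟪x, z⟫ ^ 2 / r ^ 2) := by
        rw [norm_smul, real_inner_smul_right, Real.norm_eq_abs, mul_pow, sq_abs, mul_pow]
        ring
      rw [key, Real.sqrt_mul (sq_nonneg b), Real.sqrt_sq hb0.le, real_inner_smul_right, abs_mul,
        abs_of_pos hb0]
      have hq0 := Real.sqrt_nonneg (‖z‖ ^ 2 - (⟪x, z⟫ : ℝ) ^ 2 / r ^ 2)
      have h' := mul_lt_mul_of_pos_left hz' hb0
      have h'' : (0:ℝ) ≤ (1 - b) * r ^ 2 := mul_nonneg (by linarith) (sq_nonneg r)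
      nlinarith
  -- points outside are far
  have hout : ∀ z ∈ G'ᶜ, r ≤ ‖z‖ := by
    intro z hzc
    rw [mem_compl_iff, hmem, not_lt] at hzc
    have hCS := abs_real_inner_le_norm x z
    have hq0 := Real.sqrt_nonneg (‖z‖ ^ 2 - (⟪x, z⟫ : ℝ) ^ 2 / r ^ 2)
    nlinarith
  -- boundary helper
  have hxbd : ∀ v : EuclideanSpace ℝ (Fin n), ‖v‖ = r → |⟪x, v⟫| = r ^ 2 → v ∉ G' := by
    intro v hnv hpv
    rw [hmem, not_lt]
    have hsq : (⟪x, v⟫ : ℝ) ^ 2 = (r ^ 2) ^ 2 := by rw [← sq_abs, hpv]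
    have h1 : ‖v‖ ^ 2 - (⟪x, v⟫ : ℝ) ^ 2 / r ^ 2 = 0 := by
      rw [hnv, hsq]; field_simp; ring
    rw [h1, Real.sqrt_zero, mul_zero, add_zero, hpv]
  have hxc : x ∈ G'ᶜ := by
    rw [mem_compl_iff]
    exact hxbd x rfl (by rw [real_inner_self_eq_norm_sq, abs_of_nonneg (sq_nonneg _)])
  -- infDist
  have hinf : Metric.infDist 0 G'ᶜ = r := by
    refine le_antisymm ?_ ?_
    · have : Metric.infDist 0 G'ᶜ ≤ dist (0 : EuclideanSpace ℝ (Fin n)) x :=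
        Metric.infDist_le_dist_of_mem hxc
      rwa [dist_zero_left] at this
    · by_contra hlt
      push_neg at hlt
      rw [Metric.infDist_lt_iff ⟨x, hxc⟩] at hlt
      obtain ⟨z, hzc, hdz⟩ := hlt
      rw [dist_zero_left] at hdz
      exact absurd hdz (not_lt.2 (hout z hzc))
  -- orthogonal vector
  obtain ⟨w, hwx, hw0⟩ : ∃ w : EuclideanSpace ℝ (Fin n), (⟪x, w⟫ : ℝ) = 0 ∧ w ≠ 0 := by
    have hne : (ℝ ∙ x)ᗮ ≠ ⊥ := by
      intro hbot
      rw [Submodule.orthogonal_eq_bot_iff] at hbot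
      have h1 : Module.finrank ℝ (ℝ ∙ x) = 1 := finrank_span_singleton hx
      rw [hbot, finrank_top, finrank_euclideanSpace_fin] at h1
      omega
    obtain ⟨w, hwmem, hw0⟩ := Submodule.exists_mem_ne_zero_of_ne_bot hne
    exact ⟨w, (Submodule.mem_orthogonal _ w).1 hwmem x (Submodule.mem_span_singleton_self x), hw0⟩
  have hwn : 0 < ‖w‖ := norm_pos_iff.2 hw0
  -- frontier membership helper
  have hbd : ∀ v : EuclideanSpace ℝ (Fin n), (⟪v, w⟫ : ℝ) = 0 → ‖v‖ = r →
      |⟪x, v⟫| = r ^ 2 → v ∈ frontier G' := by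
    intro v hvw hnv hpv
    rw [hopen.frontier_eq, Set.mem_diff]
    refine ⟨?_, hxbd v hnv hpv⟩
    rw [Metric.mem_closure_iff]
    intro ε hε
    set t : ℝ := ε / (2 * ‖w‖) with ht
    have ht0 : 0 < t := by positivity
    refine ⟨v + t • w, ?_, ?_⟩
    · rw [hmem]
      have hip : (⟪x, v + t • w⟫ : ℝ) = ⟪x, v⟫ := by
        rw [inner_add_right, real_inner_smul_right, hwx]; ring
      have hnrm : ‖v + t • w‖ ^ 2 = r ^ 2 + t ^ 2 * ‖w‖ ^ 2 := by
        rw [norm_add_sq_real, real_inner_smul_right, hvw, hnv, norm_smul, Real.norm_eq_abs,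
          mul_pow, sq_abs]; ring
      have hsq : (⟪x, v⟫ : ℝ) ^ 2 = (r ^ 2) ^ 2 := by rw [← sq_abs, hpv]
      have hq : ‖v + t • w‖ ^ 2 - (⟪x, v + t • w⟫ : ℝ) ^ 2 / r ^ 2 = (t * ‖w‖) ^ 2 := by
        rw [hnrm, hip, hsq]
        field_simp
        ring
      rw [hq, Real.sqrt_sq (by positivity), hip, hpv]
      have : 0 < r * (t * ‖w‖) := by positivity
      linarith
    · have hd : dist v (v + t • w) = t * ‖w‖ := by
        rw [dist_eq_norm]
        have : v - (v + t • w) = -(t • w) := by module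
        rw [this, norm_neg, norm_smul, Real.norm_eq_abs, abs_of_pos ht0]
      have htw : t * ‖w‖ = ε / 2 := by
        rw [ht, div_mul_eq_mul_div]
        rw [mul_comm (2:ℝ) ‖w‖, ← div_div, mul_div_assoc, div_self hwn.ne', mul_one]
      rw [hd, htw]
      linarith
  have hfx : x ∈ frontier G' :=
    hbd x hwx rfl (by rw [real_inner_self_eq_norm_sq, abs_of_nonneg (sq_nonneg _)])
  have hfnx : (-x) ∈ frontier G' := by
    refine hbd (-x) (by rw [inner_neg_left, hwx, neg_zero]) (norm_neg x) ?_
    rw [inner_neg_right, abs_neg, real_inner_self_eq_norm_sq, abs_of_nonneg (sq_nonneg _)]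
  refine ⟨hopen, hconn, h0mem, hinf, ?_⟩
  intro c hc0 hc1
  have h1c : 0 < 1 - c := by linarith
  have hcr : ‖c • x‖ = c * r := by
    rw [norm_smul, Real.norm_eq_abs, abs_of_nonneg hc0]
  have harg : (r + ‖c • x‖) / (r - ‖c • x‖) = (1 + c) / (1 - c) := by
    rw [hcr]
    rw [div_eq_div_iff (by nlinarith) (by linarith)]
    ring
  -- attained value
  have d1 : dist (-x) (c • x) = (1 + c) * r := by
    rw [dist_eq_norm]
    have : -x - c • x = -((1 + c) • x) := by module
    rw [this, norm_neg, norm_smul, Real.norm_eq_abs, abs_of_nonneg (by linarith)]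
  have d2 : dist x (0 : EuclideanSpace ℝ (Fin n)) = r := by rw [dist_zero_right]
  have d3 : dist (-x) (0 : EuclideanSpace ℝ (Fin n)) = r := by rw [dist_zero_right, norm_neg]
  have d4 : dist x (c • x) = (1 - c) * r := by
    rw [dist_eq_norm]
    have : x - c • x = (1 - c) • x := by module
    rw [this, norm_smul, Real.norm_eq_abs, abs_of_pos h1c]
  have hlast : Real.log ((dist (-x) (c • x) * dist x 0) / (dist (-x) 0 * dist x (c • x))) =
      Real.log ((r + ‖c • x‖) / (r - ‖c • x‖)) := by
    rw [d1, d2, d3, d4, harg]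
    congr 1
    field_simp
  refine ⟨?_, hfnx, hfx, hlast⟩
  -- the supremum
  refine IsGreatest.csSup_eq ⟨⟨-x, hfnx, x, hfx, hlast.symm⟩, ?_⟩
  rintro L ⟨a, ha, b, hb, rfl⟩
  have haC : a ∉ G' := ((hopen.frontier_eq ▸ ha) : a ∈ closure G' \ G').2
  have hbC : b ∉ G' := ((hopen.frontier_eq ▸ hb) : b ∈ closure G' \ G').2
  have hna : r ≤ ‖a‖ := hout a haC
  have hnb : r ≤ ‖b‖ := hout b hbC
  have hya : dist a (c • x) ≤ (1 + c) * ‖a‖ := by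
    have h := dist_triangle a 0 (c • x)
    rw [dist_zero_right, dist_zero_left, hcr] at h
    nlinarith
  have hyb : (1 - c) * ‖b‖ ≤ dist b (c • x) := by
    have h := dist_triangle b (c • x) 0
    rw [dist_zero_right, dist_zero_right, hcr] at h
    nlinarith
  have hpa : (0 : ℝ) < dist a 0 := by rw [dist_zero_right]; linarith
  have hpb : (0 : ℝ) < dist b 0 := by rw [dist_zero_right]; linarith
  have hpbY : (0 : ℝ) < dist b (c • x) := lt_of_lt_of_le (by nlinarith) hyb
  have hpaY : (0 : ℝ) < dist a (c • x) := by
    rw [dist_pos]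
    intro h
    rw [h, hcr] at hna
    nlinarith
  have hA : (dist a (c • x) * dist b 0) / (dist a 0 * dist b (c • x)) ≤ (1 + c) / (1 - c) := by
    rw [div_le_div_iff₀ (by positivity) h1c]
    have hmul := mul_le_mul hya hyb (by positivity) (by positivity)
    rw [dist_zero_right, dist_zero_right]
    nlinarith
  have hApos : 0 < (dist a (c • x) * dist b 0) / (dist a 0 * dist b (c • x)) := by positivity
  calc Real.log ((dist a (c • x) * dist b 0) / (dist a 0 * dist b (c • x)))
      ≤ Real.log ((1 + c) / (1 - c)) := Real.log_le_log hApos hA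
    _ = Real.log ((r + ‖c • x‖) / (r - ‖c • x‖)) := by rw [harg]
end

section
/- For all u, w ∈ G, the Seittenranta distance satisfies δ_G(u,w) ≤ log( 1 + |u−w|/d_G(u) + |u−w|/d_G(w) + |u−w|² / ( d_G(u)·d_G(w) ) ). -/
/-- Let `G ⊊ ℝⁿ` be a domain. For all `u, w ∈ G`, the Seittenranta
distance `δ_G(u,w) = sup_{a,b ∈ ∂G} log (1 + (|a-b| ⬝ |u-w|)/(|a-u| ⬝ |b-w|))`
satisfies
`δ_G(u,w) ≤ log (1 + |u-w|/d_G u + |u-w|/d_G w + |u-w|²/(d_G u ⬝ d_G w))`. -/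
theorem seittenranta_upper_bound (n : ℕ) (hn : 0 < n)
    (G : Set (EuclideanSpace ℝ (Fin n)))
    (hGopen : IsOpen G) (hGconn : IsConnected G) (hGne : G ≠ Set.univ)
    (u w : EuclideanSpace ℝ (Fin n)) (hu : u ∈ G) (hw : w ∈ G) :
    sSup {L : ℝ | ∃ a ∈ frontier G, ∃ b ∈ frontier G,
        L = Real.log (1 + (dist a b * dist u w) / (dist a u * dist b w))} ≤
      Real.log (1 + dist u w / Metric.infDist u Gᶜ + dist u w / Metric.infDist w Gᶜ +
        dist u w ^ 2 / (Metric.infDist u Gᶜ * Metric.infDist w Gᶜ)) := by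
  set du := Metric.infDist u Gᶜ with hdu_def
  set dw := Metric.infDist w Gᶜ with hdw_def
  have hGcne : Gᶜ.Nonempty := by
    rw [Set.nonempty_compl]; exact hGne
  have hGcclosed : IsClosed Gᶜ := hGopen.isClosed_compl
  have hdu : 0 < du := by
    rw [hdu_def, ← hGcclosed.notMem_iff_infDist_pos hGcne]
    simpa using hu
  have hdw : 0 < dw := by
    rw [hdw_def, ← hGcclosed.notMem_iff_infDist_pos hGcne]
    simpa using hw
  have hfr : frontier G ⊆ Gᶜ := by
    intro x hx
    rw [frontier, hGopen.interior_eq] at hx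
    exact hx.2
  have hrhs : (0:ℝ) ≤ Real.log (1 + dist u w / du + dist u w / dw +
      dist u w ^ 2 / (du * dw)) := by
    apply Real.log_nonneg
    have h1 : 0 ≤ dist u w / du := by positivity
    have h2 : 0 ≤ dist u w / dw := by positivity
    have h3 : 0 ≤ dist u w ^ 2 / (du * dw) := by positivity
    linarith
  apply Real.sSup_le _ hrhs
  rintro L ⟨a, ha, b, hb, rfl⟩
  have hau : du ≤ dist a u := by
    rw [dist_comm]; exact Metric.infDist_le_dist_of_mem (hfr ha)
  have hbw : dw ≤ dist b w := by
    rw [dist_comm]; exact Metric.infDist_le_dist_of_mem (hfr hb)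
  have hau0 : 0 < dist a u := lt_of_lt_of_le hdu hau
  have hbw0 : 0 < dist b w := lt_of_lt_of_le hdw hbw
  have key : (dist a b * dist u w) / (dist a u * dist b w) ≤
      dist u w / du + dist u w / dw + dist u w ^ 2 / (du * dw) := by
    calc (dist a b * dist u w) / (dist a u * dist b w)
        ≤ ((dist a u + dist u w + dist w b) * dist u w) / (dist a u * dist b w) := by
          gcongr
          exact dist_triangle4 a u w b
      _ = dist u w / dist b w + dist u w / dist a u +
            dist u w ^ 2 / (dist a u * dist b w) := by
          rw [dist_comm w b]
          field_simp
          ring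
      _ ≤ dist u w / dw + dist u w / du + dist u w ^ 2 / (du * dw) := by
          gcongr <;> positivity
      _ = dist u w / du + dist u w / dw + dist u w ^ 2 / (du * dw) := by ring
  apply Real.log_le_log (by positivity)
  linarith
end

section
/- For all u, w ∈ G, the Apollonian distance is bounded above by the Seittenranta distance: α_G(u,w) ≤ δ_G(u,w). (This follows from the pointwise Ptolemy inequality |a−w|·|b−u| ≤ |a−u|·|b−w| + |a−b|·|u−w| valid for all a, b ∈ ℝⁿ.) -/
/-- The pointwise Ptolemy inequality
`|a-w| ⬝ |b-u| ≤ |a-u| ⬝ |b-w| + |a-b| ⬝ |u-w|` holds for all points of `ℝⁿ`, and for a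
domain `G ⊊ ℝⁿ` and all `u, w ∈ G` the Apollonian distance is bounded above by the
Seittenranta distance: `α_G(u,w) ≤ δ_G(u,w)`. -/
theorem apollonian_le_seittenranta (n : ℕ) (hn : 0 < n)
    (G : Set (EuclideanSpace ℝ (Fin n)))
    (hGopen : IsOpen G) (hGconn : IsConnected G) (hGne : G ≠ Set.univ)
    (u w : EuclideanSpace ℝ (Fin n)) (hu : u ∈ G) (hw : w ∈ G) :
    (∀ a b u' w' : EuclideanSpace ℝ (Fin n),
        dist a w' * dist b u' ≤ dist a u' * dist b w' + dist a b * dist u' w') ∧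
      sSup {L : ℝ | ∃ a ∈ frontier G, ∃ b ∈ frontier G,
          L = Real.log ((dist a w * dist b u) / (dist a u * dist b w))} ≤
        sSup {L : ℝ | ∃ a ∈ frontier G, ∃ b ∈ frontier G,
          L = Real.log (1 + (dist a b * dist u w) / (dist a u * dist b w))} := by
  have ptol : ∀ a b u' w' : EuclideanSpace ℝ (Fin n),
      dist a w' * dist b u' ≤ dist a u' * dist b w' + dist a b * dist u' w' := by
    intro a b u' w'
    have := EuclideanGeometry.mul_dist_le_mul_dist_add_mul_dist (a := a) (b := u') (c := w')
      (d := b)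
    calc dist a w' * dist b u' = dist a w' * dist u' b := by rw [dist_comm b u']
      _ ≤ dist a u' * dist w' b + dist u' w' * dist a b := this
      _ = dist a u' * dist b w' + dist a b * dist u' w' := by
          rw [dist_comm w' b]; ring
  refine ⟨ptol, ?_⟩
  -- frontier is nonempty
  have hfr : (frontier G).Nonempty := by
    by_contra h
    rw [Set.not_nonempty_iff_eq_empty, ← isClopen_iff_frontier_eq_empty] at h
    rcases isClopen_iff.mp h with h' | h'
    · exact (hGconn.nonempty.ne_empty) h'
    · exact hGne h'
  -- points of the frontier are far from u and w
  obtain ⟨r, hr, hru⟩ := Metric.isOpen_iff.mp hGopen u hu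
  obtain ⟨s, hs, hsw⟩ := Metric.isOpen_iff.mp hGopen w hw
  have hfru : ∀ a ∈ frontier G, r ≤ dist a u := by
    intro a ha
    by_contra h
    push_neg at h
    have : a ∈ G := hru (by rwa [Metric.mem_ball])
    exact ((hGopen.frontier_eq ▸ ha).2 this)
  have hfrw : ∀ b ∈ frontier G, s ≤ dist b w := by
    intro b hb
    by_contra h
    push_neg at h
    have : b ∈ G := hsw (by rwa [Metric.mem_ball])
    exact ((hGopen.frontier_eq ▸ hb).2 this)
  -- the RHS set is bounded above
  set T := {L : ℝ | ∃ a ∈ frontier G, ∃ b ∈ frontier G,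
      L = Real.log (1 + (dist a b * dist u w) / (dist a u * dist b w))}
  have hTbdd : BddAbove T := by
    refine ⟨Real.log (1 + (dist u w / s + dist u w ^ 2 / (r * s) + dist u w / r)), ?_⟩
    rintro L ⟨a, ha, b, hb, rfl⟩
    have hau : r ≤ dist a u := hfru a ha
    have hbw : s ≤ dist b w := hfrw b hb
    have hau0 : 0 < dist a u := lt_of_lt_of_le hr hau
    have hbw0 : 0 < dist b w := lt_of_lt_of_le hs hbw
    apply Real.log_le_log (by positivity)
    gcongr 1 + ?_
    have hab : dist a b ≤ dist a u + dist u w + dist b w := by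
      calc dist a b ≤ dist a u + dist u b := dist_triangle a u b
        _ ≤ dist a u + (dist u w + dist w b) := by gcongr; exact dist_triangle u w b
        _ = dist a u + dist u w + dist b w := by rw [dist_comm w b]; ring
    calc dist a b * dist u w / (dist a u * dist b w)
        ≤ (dist a u + dist u w + dist b w) * dist u w / (dist a u * dist b w) := by
          gcongr
      _ = dist u w / dist b w + dist u w ^ 2 / (dist a u * dist b w)
          + dist u w / dist a u := by field_simp
      _ ≤ dist u w / s + dist u w ^ 2 / (r * s) + dist u w / r := by
          gcongr <;> positivity
  -- T contains 0 (take a = b), so sSup T ≥ 0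
  obtain ⟨a₀, ha₀⟩ := hfr
  have h0T : (0 : ℝ) ∈ T := by
    refine ⟨a₀, ha₀, a₀, ha₀, ?_⟩
    simp
  apply Real.sSup_le
  · rintro L ⟨a, ha, b, hb, rfl⟩
    have hau : r ≤ dist a u := hfru a ha
    have hbw : s ≤ dist b w := hfrw b hb
    have hau0 : 0 < dist a u := lt_of_lt_of_le hr hau
    have hbw0 : 0 < dist b w := lt_of_lt_of_le hs hbw
    have key : Real.log ((dist a w * dist b u) / (dist a u * dist b w)) ≤
        Real.log (1 + (dist a b * dist u w) / (dist a u * dist b w)) := by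
      rcases eq_or_lt_of_le (mul_nonneg dist_nonneg dist_nonneg :
          (0:ℝ) ≤ dist a w * dist b u) with h | h
      · rw [← h, zero_div, Real.log_zero]
        apply Real.log_nonneg
        have : 0 ≤ (dist a b * dist u w) / (dist a u * dist b w) := by positivity
        linarith
      · apply Real.log_le_log (by positivity)
        have h1 : 1 + dist a b * dist u w / (dist a u * dist b w)
            = (dist a u * dist b w + dist a b * dist u w) / (dist a u * dist b w) := by
          field_simp
        rw [h1]
        gcongr
        linarith [ptol a b u w]
    exact key.trans (le_csSup hTbdd ⟨a, ha, b, hb, rfl⟩)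
  · exact le_csSup hTbdd h0T
end

section
/- Let u, w ∈ ℝⁿ with u ≠ w and suppose that 0 does not lie on the affine line through u and w. Then the function h(β) = ∠(u, 0, u + β·(w−u)), the Euclidean angle at vertex 0 between u and u + β·(w−u), is strictly increasing for β ∈ [0,∞): for all 0 ≤ β₁ < β₂ one has h(β₁) < h(β₂). -/
open scoped RealInnerProductSpace

/-- Core real inequality. -/
lemma visual_angle_key (a b c β₁ β₂ q₁ q₂ : ℝ) (ha : 0 < a) (hcs : b ^ 2 < a * c)
    (hb1 : 0 ≤ β₁) (hlt : β₁ < β₂) (hq1 : 0 < q₁) (hq2 : 0 < q₂)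
    (e1 : q₁ ^ 2 = a + 2 * β₁ * b + β₁ ^ 2 * c)
    (e2 : q₂ ^ 2 = a + 2 * β₂ * b + β₂ ^ 2 * c) :
    (a + β₂ * b) * q₁ < (a + β₁ * b) * q₂ := by
  have hb2 : 0 < β₂ := lt_of_le_of_lt hb1 hlt
  have hD : ((a + β₁ * b) * q₂) ^ 2 - ((a + β₂ * b) * q₁) ^ 2 =
      (a * c - b ^ 2) * (β₂ - β₁) * (β₁ * (a + β₂ * b) + β₂ * (a + β₁ * b)) := by
    rw [mul_pow, mul_pow, e1, e2]; ring
  by_cases hX : 0 ≤ a + β₂ * b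
  · have hY : 0 < a + β₁ * b := by
      nlinarith [mul_pos (sub_pos.2 hlt) ha, mul_nonneg hb1 hX]
    have hDpos : 0 < ((a + β₁ * b) * q₂) ^ 2 - ((a + β₂ * b) * q₁) ^ 2 := by
      rw [hD]
      have h1 : 0 < β₁ * (a + β₂ * b) + β₂ * (a + β₁ * b) := by
        nlinarith [mul_nonneg hb1 hX, mul_pos hb2 hY]
      have h2 : 0 < (a * c - b ^ 2) * (β₂ - β₁) := by
        nlinarith
      positivity
    nlinarith [mul_nonneg hX hq1.le, mul_pos hY hq2]
  · push_neg at hX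
    by_cases hY : 0 ≤ a + β₁ * b
    · have h1 : (a + β₂ * b) * q₁ < 0 := mul_neg_of_neg_of_pos hX hq1
      have h2 : 0 ≤ (a + β₁ * b) * q₂ := mul_nonneg hY hq2.le
      linarith
    · push_neg at hY
      have hDneg : ((a + β₁ * b) * q₂) ^ 2 - ((a + β₂ * b) * q₁) ^ 2 < 0 := by
        rw [hD]
        have h1 : β₁ * (a + β₂ * b) + β₂ * (a + β₁ * b) < 0 := by
          nlinarith [mul_nonpos_of_nonneg_of_nonpos hb1 hX.le, mul_pos hb2 (neg_pos.2 hY)]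
        have h2 : 0 < (a * c - b ^ 2) * (β₂ - β₁) := by nlinarith
        nlinarith
      have hs1 : (a + β₂ * b) * q₁ < 0 := mul_neg_of_neg_of_pos hX hq1
      have hs2 : (a + β₁ * b) * q₂ < 0 := mul_neg_of_neg_of_pos hY hq2
      nlinarith

/-- Let `u, w ∈ ℝⁿ` with `u ≠ w` and suppose `0` does not lie on the
affine line through `u` and `w`. Then the function
`h β = ∠(u, 0, u + β • (w - u))` (the Euclidean angle at vertex `0`) is strictly
increasing on `[0, ∞)`. -/
theorem visual_angle_strictly_increasing (n : ℕ) (hn : 0 < n)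
    (u w : EuclideanSpace ℝ (Fin n)) (huw : u ≠ w)
    (h0 : (0 : EuclideanSpace ℝ (Fin n)) ∉ affineSpan ℝ ({u, w} :
      Set (EuclideanSpace ℝ (Fin n)))) :
    ∀ β₁ β₂ : ℝ, 0 ≤ β₁ → β₁ < β₂ →
      EuclideanGeometry.angle u 0 (u + β₁ • (w - u)) <
        EuclideanGeometry.angle u 0 (u + β₂ • (w - u)) := by
  intro β₁ β₂ hb1 hlt
  set v : EuclideanSpace ℝ (Fin n) := w - u with hv
  -- every point u + β • v lies on the line through u and w
  have hmem : ∀ β : ℝ, u + β • v ∈ affineSpan ℝ ({u, w} : Set (EuclideanSpace ℝ (Fin n))) := by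
    intro β
    have := AffineMap.lineMap_mem_affineSpan_pair (k := ℝ) β u w
    simpa [AffineMap.lineMap_apply, vsub_eq_sub, vadd_eq_add, hv, add_comm] using this
  have hu : u ≠ 0 := by
    intro h
    exact h0 (h ▸ left_mem_affineSpan_pair ℝ u w)
  have hx : ∀ β : ℝ, u + β • v ≠ 0 := by
    intro β h
    exact h0 (h ▸ hmem β)
  have hvne : v ≠ 0 := sub_ne_zero.2 (Ne.symm huw)
  -- v is not a scalar multiple of u
  have hvu : ∀ t : ℝ, v ≠ t • u := by
    intro t hteq
    have ht : t ≠ 0 := by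
      intro h; rw [h, zero_smul] at hteq; exact hvne hteq
    apply hx (-(1 / t))
    rw [hteq, smul_smul]
    have : -(1 / t) * t = -1 := by field_simp
    rw [this, neg_one_smul]
    abel
  have hun : (0 : ℝ) < ‖u‖ := norm_pos_iff.2 hu
  have hvn : (0 : ℝ) < ‖v‖ := norm_pos_iff.2 hvne
  -- strict Cauchy-Schwarz
  have hcs1 : ⟪u, v⟫ < ‖u‖ * ‖v‖ := by
    rw [inner_lt_norm_mul_iff_real]
    intro h
    refine hvu (‖v‖ / ‖u‖) ?_
    apply smul_right_injective _ hun.ne'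
    show ‖u‖ • v = ‖u‖ • (‖v‖ / ‖u‖) • u
    rw [smul_smul]
    have he : ‖u‖ * (‖v‖ / ‖u‖) = ‖v‖ := by field_simp
    rw [he, h]
  have hcs2 : ⟪u, -v⟫ < ‖u‖ * ‖-v‖ := by
    rw [inner_lt_norm_mul_iff_real]
    intro h
    have h' : ‖v‖ • u = -(‖u‖ • v) := by
      rw [← smul_neg, ← norm_neg v]; exact h
    refine hvu (-(‖v‖ / ‖u‖)) ?_
    apply smul_right_injective _ hun.ne'
    show ‖u‖ • v = ‖u‖ • (-(‖v‖ / ‖u‖)) • u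
    rw [smul_smul]
    have he : ‖u‖ * -(‖v‖ / ‖u‖) = -‖v‖ := by field_simp
    rw [he, neg_smul, h', neg_neg]
  rw [inner_neg_right, norm_neg] at hcs2
  have hcs : ⟪u, v⟫ ^ 2 < ‖u‖ ^ 2 * ‖v‖ ^ 2 := by
    have habs : |⟪u, v⟫| < ‖u‖ * ‖v‖ := abs_lt.2 ⟨by linarith, hcs1⟩
    calc ⟪u, v⟫ ^ 2 = |⟪u, v⟫| ^ 2 := (sq_abs _).symm
      _ < (‖u‖ * ‖v‖) ^ 2 := by
          exact pow_lt_pow_left₀ habs (abs_nonneg _) (by norm_num)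
      _ = ‖u‖ ^ 2 * ‖v‖ ^ 2 := by ring
  -- expressions for inner products and norms
  have hinner : ∀ β : ℝ, ⟪u, u + β • v⟫ = ‖u‖ ^ 2 + β * ⟪u, v⟫ := by
    intro β
    rw [inner_add_right, real_inner_smul_right, real_inner_self_eq_norm_sq]
  have hnormsq : ∀ β : ℝ, ‖u + β • v‖ ^ 2 =
      ‖u‖ ^ 2 + 2 * β * ⟪u, v⟫ + β ^ 2 * ‖v‖ ^ 2 := by
    intro β
    rw [← real_inner_self_eq_norm_sq]
    rw [inner_add_add_self, real_inner_smul_left, real_inner_smul_right,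
      real_inner_smul_left, real_inner_smul_right, real_inner_self_eq_norm_sq,
      real_inner_self_eq_norm_sq, real_inner_comm v u]
    ring
  have hxq : ∀ β : ℝ, (0 : ℝ) < ‖u + β • v‖ := fun β => norm_pos_iff.2 (hx β)
  -- reduce the angle to arccos of the cosine quotient
  have hangle : ∀ β : ℝ, EuclideanGeometry.angle u 0 (u + β • v) =
      Real.arccos (⟪u, u + β • v⟫ / (‖u‖ * ‖u + β • v‖)) := by
    intro β
    rw [EuclideanGeometry.angle, InnerProductGeometry.angle]
    congr 1 <;> simp [vsub_eq_sub]
  rw [hangle β₁, hangle β₂]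
  have hmem' : ∀ β : ℝ, ⟪u, u + β • v⟫ / (‖u‖ * ‖u + β • v‖) ∈ Set.Icc (-1 : ℝ) 1 := by
    intro β
    constructor
    · have := abs_real_inner_div_norm_mul_norm_le_one u (u + β • v)
      rw [abs_le] at this
      exact this.1
    · have := abs_real_inner_div_norm_mul_norm_le_one u (u + β • v)
      rw [abs_le] at this
      exact this.2
  apply Real.strictAntiOn_arccos (hmem' β₂) (hmem' β₁)
  rw [div_lt_div_iff₀ (mul_pos hun (hxq β₂)) (mul_pos hun (hxq β₁))]
  rw [hinner β₁, hinner β₂]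
  have key := visual_angle_key (‖u‖ ^ 2) (⟪u, v⟫) (‖v‖ ^ 2) β₁ β₂
    ‖u + β₁ • v‖ ‖u + β₂ • v‖ (by positivity) hcs hb1 hlt (hxq β₁) (hxq β₂)
    (hnormsq β₁) (hnormsq β₂)
  nlinarith [key, hun, hxq β₁, hxq β₂]
end

section
/- For every y ∈ G with 0 < |y| < d_G(0), the visual angle distance satisfies v_G(0,y) = sup_{a ∈ ∂G} ∠(0,a,y) ≤ arcsin( |y| / d_G(0) ); consequently τ_G(0,y) = tan( v_G(0,y)/2 ) ≤ |y| / ( √( d_G(0)² − |y|² ) + d_G(0) ). -/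
open Real InnerProductGeometry RealInnerProductSpace

/-- Key pointwise bound: if `d ≤ ‖a‖` and `‖y‖ < d`, then the angle at `a` in the
triangle `0, a, y` is at most `arcsin (‖y‖ / d)`. -/
lemma angle_le_arcsin_aux {n : ℕ} (y a : EuclideanSpace ℝ (Fin n)) {d : ℝ}
    (hd : 0 < d) (hyd : ‖y‖ < d) (ha : d ≤ ‖a‖) :
    EuclideanGeometry.angle 0 a y ≤ Real.arcsin (‖y‖ / d) := by
  have ha0 : a ≠ 0 := by
    intro h; rw [h, norm_zero] at ha; linarith
  have hba : y - a ≠ 0 := by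
    intro h
    have : y = a := by rwa [sub_eq_zero] at h
    rw [this] at hyd; linarith
  have hEA : EuclideanGeometry.angle 0 a y = InnerProductGeometry.angle (0 - a) (y - a) := rfl
  set θ := InnerProductGeometry.angle (0 - a) (y - a) with hθ
  have hθ0 : 0 ≤ θ := InnerProductGeometry.angle_nonneg _ _
  have hθpi : θ ≤ π := InnerProductGeometry.angle_le_pi _ _
  -- inner product computations
  have hinner1 : ⟪(0 : EuclideanSpace ℝ (Fin n)) - a, (0:EuclideanSpace ℝ (Fin n)) - a⟫ = ‖a‖^2 := by
    rw [zero_sub, inner_neg_neg]; exact real_inner_self_eq_norm_sq a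
  have hinner2 : ⟪(0 : EuclideanSpace ℝ (Fin n)) - a, y - a⟫ = ‖a‖^2 - ⟪a, y⟫ := by
    rw [zero_sub, inner_neg_left, inner_sub_right, real_inner_self_eq_norm_sq,
      real_inner_comm]
    ring
  -- θ ≤ π/2 since cos θ ≥ 0
  have hcos : 0 ≤ Real.cos θ := by
    rw [hθ, InnerProductGeometry.cos_angle, hinner2]
    apply div_nonneg _ (by positivity)
    have h1 : ⟪a, y⟫ ≤ ‖a‖ * ‖y‖ := real_inner_le_norm a y
    nlinarith [norm_nonneg a, norm_nonneg y]
  have hθhalf : θ ≤ π / 2 := by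
    by_contra h
    push_neg at h
    have := Real.cos_neg_of_pi_div_two_lt_of_lt h (by linarith [Real.pi_pos])
    linarith
  -- sin θ ≤ ‖y‖ / d
  have hkey : Real.sin θ * (‖(0:EuclideanSpace ℝ (Fin n)) - a‖ * ‖y - a‖)
      = √(⟪(0:EuclideanSpace ℝ (Fin n)) - a, (0:EuclideanSpace ℝ (Fin n)) - a⟫ * ⟪y - a, y - a⟫
          - ⟪(0:EuclideanSpace ℝ (Fin n)) - a, y - a⟫ * ⟪(0:EuclideanSpace ℝ (Fin n)) - a, y - a⟫) :=
    InnerProductGeometry.sin_angle_mul_norm_mul_norm _ _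
  have hnorm0a : ‖(0:EuclideanSpace ℝ (Fin n)) - a‖ = ‖a‖ := by simp
  have hinner3 : ⟪y - a, y - a⟫ = ‖y - a‖^2 := real_inner_self_eq_norm_sq _
  -- the expression under the sqrt equals ‖y‖²‖y-a‖² - ⟪y, y-a⟫²
  have hexpand : ‖a‖^2 * ‖y - a‖^2 - (‖a‖^2 - ⟪a, y⟫) * (‖a‖^2 - ⟪a, y⟫)
      = ‖y‖^2 * ‖y - a‖^2 - ⟪y, y - a⟫ * ⟪y, y - a⟫ := by
    have e1 : ‖y - a‖^2 = ‖y‖^2 - 2 * ⟪a, y⟫ + ‖a‖^2 := by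
      rw [← real_inner_self_eq_norm_sq, inner_sub_sub_self, real_inner_self_eq_norm_sq,
        real_inner_self_eq_norm_sq, real_inner_comm]
      ring
    have e2 : ⟪y, y - a⟫ = ‖y‖^2 - ⟪a, y⟫ := by
      rw [inner_sub_right, real_inner_self_eq_norm_sq, real_inner_comm]
    rw [e1, e2]; ring
  have hsqrt_le : √(‖y‖^2 * ‖y - a‖^2 - ⟪y, y - a⟫ * ⟪y, y - a⟫) ≤ ‖y‖ * ‖y - a‖ := by
    rw [show ‖y‖ * ‖y - a‖ = √((‖y‖ * ‖y - a‖)^2) from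
      (Real.sqrt_sq (by positivity)).symm]
    apply Real.sqrt_le_sqrt
    nlinarith [mul_self_nonneg (⟪y, y - a⟫)]
  have hsin_mul : Real.sin θ * (‖a‖ * ‖y - a‖) ≤ ‖y‖ * ‖y - a‖ := by
    rw [← hnorm0a]
    rw [hkey, hinner1, hinner2, hinner3, hexpand]
    exact hsqrt_le
  have hapos : 0 < ‖a‖ := lt_of_lt_of_le hd ha
  have hbpos : 0 < ‖y - a‖ := norm_pos_iff.mpr hba
  have hsin : Real.sin θ ≤ ‖y‖ / ‖a‖ := by
    rw [le_div_iff₀ hapos]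
    nlinarith
  have hsin' : Real.sin θ ≤ ‖y‖ / d := by
    apply hsin.trans
    apply div_le_div_of_nonneg_left (norm_nonneg y) hd ha
  calc EuclideanGeometry.angle 0 a y = θ := hEA
    _ = Real.arcsin (Real.sin θ) := (Real.arcsin_sin (by linarith) hθhalf).symm
    _ ≤ Real.arcsin (‖y‖ / d) := Real.monotone_arcsin hsin'

/-- Let `G ⊊ ℝⁿ` be a domain with `0 ∈ G`. For every `y ∈ G` with
`0 < |y| < d_G 0`, the visual angle distance
`v_G(0,y) = sup_{a ∈ ∂G} ∠(0,a,y)` satisfies `v_G(0,y) ≤ arcsin (|y| / d_G 0)`, and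
consequently `τ_G(0,y) = tan (v_G(0,y)/2) ≤ |y| / (√(d_G 0² - |y|²) + d_G 0)`. -/
theorem visual_angle_upper_bound (n : ℕ) (hn : 0 < n)
    (G : Set (EuclideanSpace ℝ (Fin n)))
    (hGopen : IsOpen G) (hGconn : IsConnected G) (hGne : G ≠ Set.univ)
    (h0 : (0 : EuclideanSpace ℝ (Fin n)) ∈ G)
    (y : EuclideanSpace ℝ (Fin n)) (hy : y ∈ G)
    (hy0 : 0 < ‖y‖) (hlt : ‖y‖ < Metric.infDist 0 Gᶜ)
    (v : ℝ)
    (hv : v = sSup ((fun a => EuclideanGeometry.angle 0 a y) '' frontier G)) :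
    v ≤ Real.arcsin (‖y‖ / Metric.infDist 0 Gᶜ) ∧
      Real.tan (v / 2) ≤
        ‖y‖ / (Real.sqrt (Metric.infDist 0 Gᶜ ^ 2 - ‖y‖ ^ 2) + Metric.infDist 0 Gᶜ) := by
  set d := Metric.infDist 0 Gᶜ with hdef
  have hd : 0 < d := lt_trans hy0 hlt
  -- every frontier point is at distance ≥ d from 0
  have hfar : ∀ a ∈ frontier G, d ≤ ‖a‖ := by
    intro a ha
    have ha' : a ∈ closure Gᶜ := by
      rw [frontier_eq_closure_inter_closure] at ha
      exact ha.2
    have h2 := Metric.infDist_le_dist_of_mem (x := (0 : EuclideanSpace ℝ (Fin n))) ha'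
    rw [Metric.infDist_closure, dist_zero_left] at h2
    rw [hdef]
    exact h2
  -- frontier nonempty
  have hne : (frontier G).Nonempty := by
    rw [nonempty_frontier_iff]
    exact ⟨⟨0, h0⟩, hGne⟩
  have hbound : ∀ x ∈ (fun a => EuclideanGeometry.angle 0 a y) '' frontier G,
      x ≤ Real.arcsin (‖y‖ / d) := by
    rintro x ⟨a, haf, rfl⟩
    exact angle_le_arcsin_aux y a hd hlt (hfar a haf)
  have h1 : v ≤ Real.arcsin (‖y‖ / d) := by
    rw [hv]
    exact csSup_le (hne.image _) hbound
  refine ⟨h1, ?_⟩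
  -- nonneg of v
  have hv0 : 0 ≤ v := by
    obtain ⟨a, ha⟩ := hne
    rw [hv]
    refine le_trans (EuclideanGeometry.angle_nonneg 0 a y) (le_csSup ⟨Real.arcsin (‖y‖/d), hbound⟩ ⟨a, ha, rfl⟩)
  set α := Real.arcsin (‖y‖ / d) with hα
  have hratio1 : ‖y‖ / d ≤ 1 := by
    rw [div_le_one hd]; linarith
  have hratio0 : 0 ≤ ‖y‖ / d := by positivity
  have hαle : α ≤ π / 2 := Real.arcsin_le_pi_div_two _
  have hαlt : α < π / 2 := by
    rcases lt_or_eq_of_le hαle with h | h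
    · exact h
    · exfalso
      have := Real.sin_arcsin (by linarith) hratio1
      rw [← hα, h, Real.sin_pi_div_two] at this
      have : ‖y‖ = d := by
        field_simp at this; linarith
      linarith
  have htan : Real.tan (v / 2) ≤ Real.tan (α / 2) := by
    rcases eq_or_lt_of_le h1 with h | h
    · rw [h]
    · exact le_of_lt (Real.tan_lt_tan_of_nonneg_of_lt_pi_div_two (by linarith)
        (by linarith [Real.pi_pos]) (by linarith))
  refine htan.trans ?_
  -- compute tan (α/2)
  have hsinα : Real.sin α = ‖y‖ / d := Real.sin_arcsin (by linarith) hratio1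
  have hcosα : Real.cos α = √(d^2 - ‖y‖^2) / d := by
    rw [hα, Real.cos_arcsin]
    rw [show 1 - (‖y‖/d)^2 = (d^2 - ‖y‖^2) / d^2 by field_simp]
    rw [Real.sqrt_div (by nlinarith) (d^2), Real.sqrt_sq hd.le]
  have hα0 : 0 ≤ α := Real.arcsin_nonneg.mpr hratio0
  have hcospos : 0 < Real.cos (α / 2) :=
    Real.cos_pos_of_mem_Ioo ⟨by linarith [Real.pi_pos], by linarith⟩
  have hsin2 : Real.sin α = 2 * Real.sin (α/2) * Real.cos (α/2) := by
    rw [show α = 2 * (α/2) by ring, Real.sin_two_mul]; ring_nf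
  have hcos2 : Real.cos α = 2 * Real.cos (α/2)^2 - 1 := by
    rw [show α = 2 * (α/2) by ring, Real.cos_two_mul]; ring_nf
  have htanhalf : Real.tan (α/2) = Real.sin α / (1 + Real.cos α) := by
    rw [Real.tan_eq_sin_div_cos, hsin2, hcos2]
    rw [show 1 + (2 * Real.cos (α/2)^2 - 1) = 2 * Real.cos (α/2)^2 by ring]
    field_simp
  have hsq : 0 ≤ √(d^2 - ‖y‖^2) := Real.sqrt_nonneg _
  rw [htanhalf, hsinα, hcosα]
  rw [show 1 + √(d^2 - ‖y‖^2)/d = (d + √(d^2 - ‖y‖^2))/d by field_simp]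
  apply le_of_eq
  have hds : (0:ℝ) < d + √(d ^ 2 - ‖y‖ ^ 2) := by positivity
  rw [div_div_div_cancel_right₀, add_comm]
  exact hd.ne'
end
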